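/- arXiv:2208.03941 — 14 statements merged into one kernel-verified Lean document; each statement's English description precedes it below -/
import Mathlib

section
/- Let n be a positive integer, H a symmetric n×n real matrix, and λ0, λm, s positive reals with 0 < s ≤ 2/λm, such that (λ0/2)‖v‖² ≤ vᵀHv ≤ λm‖v‖² for all v ∈ ℝⁿ. Let Δ : ℝ → ℝⁿ be twice continuously differentiable and satisfy the heavy-ball residual dynamics Δ''(t) + √(2λ0) Δ'(t) + (1 + √(λ0 s/2)) H Δ(t) = 0 for all t ≥ 0, with Δ'(0) = 0. Then for all t ≥ 0, the loss L(t) := (1/2)‖Δ(t)‖² satisfies L(t) ≤ (6 L̂(0)/λ0) · exp(−(2−√2) √(λ0/2) t), where L̂(0) := (1/2) Δ(0)ᵀ H Δ(0). -/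
set_option maxHeartbeats 4000000


open scoped RealInnerProductSpace

theorem hb_loss_convergence
    (n : ℕ) (hn : 0 < n) (H : Matrix (Fin n) (Fin n) ℝ) (hHsymm : H.IsSymm)
    (lam0 lamm s : ℝ) (hlam0 : 0 < lam0) (hlamm : 0 < lamm)
    (hs : 0 < s) (hs2 : s ≤ 2 / lamm)
    (hlow : ∀ v : EuclideanSpace ℝ (Fin n),
      lam0 / 2 * ‖v‖ ^ 2 ≤ ⟪v, Matrix.toEuclideanLin H v⟫)
    (hup : ∀ v : EuclideanSpace ℝ (Fin n),
      ⟪v, Matrix.toEuclideanLin H v⟫ ≤ lamm * ‖v‖ ^ 2)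
    (Δ : ℝ → EuclideanSpace ℝ (Fin n)) (hΔ : ContDiff ℝ 2 Δ)
    (hode : ∀ t : ℝ, 0 ≤ t →
      deriv (deriv Δ) t + Real.sqrt (2 * lam0) • deriv Δ t
        + (1 + Real.sqrt (lam0 * s / 2)) • Matrix.toEuclideanLin H (Δ t) = 0)
    (hinit : deriv Δ 0 = 0) :
    ∀ t : ℝ, 0 ≤ t →
      (1 / 2) * ‖Δ t‖ ^ 2 ≤
        6 * ((1 / 2) * ⟪Δ 0, Matrix.toEuclideanLin H (Δ 0)⟫) / lam0 *
          Real.exp (-(2 - Real.sqrt 2) * Real.sqrt (lam0 / 2) * t) := by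
  set a : ℝ := Real.sqrt (lam0 / 2) with ha_def
  set c : ℝ := 1 + Real.sqrt (lam0 * s / 2) with hc_def
  set T : EuclideanSpace ℝ (Fin n) →ₗ[ℝ] EuclideanSpace ℝ (Fin n) :=
    Matrix.toEuclideanLin H with hT_def
  have ha : 0 < a := Real.sqrt_pos.mpr (by linarith)
  have ha2 : a ^ 2 = lam0 / 2 := Real.sq_sqrt (by linarith)
  have hc1 : 1 ≤ c := by
    have h := Real.sqrt_nonneg (lam0 * s / 2); rw [hc_def]; linarith
  -- lam0/2 ≤ lamm
  have hll : lam0 / 2 ≤ lamm := by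
    set v : EuclideanSpace ℝ (Fin n) := EuclideanSpace.single ⟨0, hn⟩ (1:ℝ)
    have hv : ‖v‖ = 1 := by simp [v, EuclideanSpace.norm_single]
    have h6 := le_trans (hlow v) (hup v)
    rw [hv] at h6; simpa using h6
  have hc3 : c ≤ 3 := by
    have h1 : lam0 * s / 2 ≤ 2 := by
      have h2 : lam0 * s ≤ lam0 * (2 / lamm) :=
        mul_le_mul_of_nonneg_left hs2 (le_of_lt hlam0)
      have h3 : lam0 * (2 / lamm) ≤ (2 * lamm) * (2 / lamm) := by
        have : 0 < 2 / lamm := by positivity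
        nlinarith
      have h4 : (2 * lamm) * (2 / lamm) = 4 := by field_simp; ring
      nlinarith
    have : Real.sqrt (lam0 * s / 2) ≤ Real.sqrt 2 := Real.sqrt_le_sqrt h1
    have h2 : Real.sqrt 2 ≤ 2 := by
      have h5 : Real.sqrt 2 ≤ Real.sqrt 4 := Real.sqrt_le_sqrt (by norm_num)
      rwa [show (4:ℝ) = 2^2 by norm_num, Real.sqrt_sq (by norm_num)] at h5
    rw [hc_def]; linarith
  -- symmetry of T
  have hsym : ∀ x y : EuclideanSpace ℝ (Fin n), ⟪T x, y⟫ = ⟪x, T y⟫ := by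
    have hHerm : H.IsHermitian := by
      ext i j
      simpa [Matrix.conjTranspose_apply] using congrFun (congrFun hHsymm i) j
    exact fun x y => (Matrix.isHermitian_iff_isSymmetric.mp hHerm) x y
  -- differentiability
  have hd1 : Differentiable ℝ Δ := hΔ.differentiable (by norm_num)
  have hd2 : Differentiable ℝ (deriv Δ) := by
    have h := (contDiff_succ_iff_deriv (n := 1)).mp (by exact_mod_cast hΔ)
    exact h.2.2.differentiable (by norm_num)
  set D : ℝ → EuclideanSpace ℝ (Fin n) := deriv Δ with hD_def
  set D2 : ℝ → EuclideanSpace ℝ (Fin n) := deriv D with hD2_def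
  -- ODE rewritten
  have hode' : ∀ τ : ℝ, 0 ≤ τ → D2 τ = -((2*a) • D τ) - c • T (Δ τ) := by
    intro τ hτ
    have hsq : Real.sqrt (2 * lam0) = 2 * a := by
      rw [ha_def, show 2*lam0 = 2^2 * (lam0/2) by ring,
        Real.sqrt_mul (by positivity), Real.sqrt_sq (by norm_num)]
    have h := hode τ hτ
    rw [hsq] at h
    have : D2 τ + (2*a) • D τ + c • T (Δ τ) = 0 := h
    have := congrArg (fun z => z - (2*a) • D τ - c • T (Δ τ)) this
    simpa [sub_eq_add_neg, add_assoc, add_comm, add_left_comm] using this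
  -- the Lyapunov function
  set w : ℝ → EuclideanSpace ℝ (Fin n) := fun τ => D τ + a • Δ τ with hw_def
  set E : ℝ → ℝ := fun τ =>
    (⟪w τ, w τ⟫ + (c * ⟪Δ τ, T (Δ τ)⟫ - a^2 * ⟪Δ τ, Δ τ⟫)) / 2 with hE_def
  -- derivative of E
  have hE' : ∀ τ : ℝ, 0 ≤ τ → HasDerivAt E (-(2*a) * E τ) τ := by
    intro τ hτ
    have hDτ : HasDerivAt Δ (D τ) τ := (hd1 τ).hasDerivAt
    have hD2τ : HasDerivAt D (D2 τ) τ := (hd2 τ).hasDerivAt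
    have hTΔ : HasDerivAt (fun u => T (Δ u)) (T (D τ)) τ := by
      have h7 := (LinearMap.toContinuousLinearMap T).hasFDerivAt.comp_hasDerivAt τ hDτ
      exact h7
    have hw' : HasDerivAt w (D2 τ + a • D τ) τ := hD2τ.add (hDτ.const_smul a)
    have h1 : HasDerivAt (fun u => ⟪w u, w u⟫)
        (⟪w τ, D2 τ + a • D τ⟫ + ⟪D2 τ + a • D τ, w τ⟫) τ := hw'.inner ℝ hw'
    have h2 : HasDerivAt (fun u => ⟪Δ u, T (Δ u)⟫)
        (⟪Δ τ, T (D τ)⟫ + ⟪D τ, T (Δ τ)⟫) τ := hDτ.inner ℝ hTΔ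
    have h3 : HasDerivAt (fun u => ⟪Δ u, Δ u⟫) (⟪Δ τ, D τ⟫ + ⟪D τ, Δ τ⟫) τ :=
      hDτ.inner ℝ hDτ
    have hEd : HasDerivAt E
        (((⟪w τ, D2 τ + a • D τ⟫ + ⟪D2 τ + a • D τ, w τ⟫)
          + (c * (⟪Δ τ, T (D τ)⟫ + ⟪D τ, T (Δ τ)⟫)
            - a^2 * (⟪Δ τ, D τ⟫ + ⟪D τ, Δ τ⟫))) / 2) τ :=
      (h1.add ((h2.const_mul c).sub (h3.const_mul (a^2)))).div_const 2
    convert hEd using 1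
    rw [hode' τ hτ]
    have e1 : ⟪Δ τ, T (D τ)⟫ = ⟪D τ, T (Δ τ)⟫ := by
      rw [← hsym, real_inner_comm]
    simp only [hE_def, hw_def, hD_def, hD2_def, inner_add_left, inner_add_right,
      inner_sub_left, inner_sub_right, inner_neg_left, inner_neg_right,
      real_inner_smul_left, real_inner_smul_right, e1,
      real_inner_comm (T (Δ τ)) (Δ τ), real_inner_comm (T (Δ τ)) (deriv Δ τ),
      real_inner_comm (deriv Δ τ) (Δ τ)]
    rw [← hsym (Δ τ) (deriv Δ τ)]
    ring
  -- E decays exactly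
  have hEeq : ∀ τ : ℝ, 0 ≤ τ → E τ = E 0 * Real.exp (-(2*a) * τ) := by
    intro τ hτ
    set F : ℝ → ℝ := fun u => Real.exp (2*a*u) * E u with hF_def
    have hF' : ∀ u ∈ Set.Icc (0:ℝ) τ, HasDerivWithinAt F 0 (Set.Icc 0 τ) u := by
      intro u hu
      have he : HasDerivAt (fun u : ℝ => Real.exp (2*a*u)) (Real.exp (2*a*u) * (2*a)) u := by
        simpa using ((hasDerivAt_id u).const_mul (2*a)).exp
      have h8 : HasDerivAt F (Real.exp (2*a*u) * (2*a) * E u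
          + Real.exp (2*a*u) * (-(2*a) * E u)) u := he.mul (hE' u hu.1)
      have h9 : Real.exp (2*a*u) * (2*a) * E u + Real.exp (2*a*u) * (-(2*a) * E u) = 0 := by ring
      rw [h9] at h8
      exact h8.hasDerivWithinAt
    have hmv := Convex.norm_image_sub_le_of_norm_hasDerivWithin_le hF'
      (fun u _ => by rw [norm_zero]) (convex_Icc 0 τ)
      (Set.left_mem_Icc.mpr hτ) (Set.right_mem_Icc.mpr hτ)
    rw [zero_mul] at hmv
    have hFτ : F τ = F 0 := by
      have := norm_sub_eq_zero_iff.mp (le_antisymm hmv (norm_nonneg _))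
      exact this
    have hF0 : F 0 = E 0 := by simp [hF_def]
    have hFτ' : Real.exp (2*a*τ) * E τ = E 0 := by rw [← hF0, ← hFτ]
    have hpos : Real.exp (2*a*τ) ≠ 0 := (Real.exp_pos _).ne'
    rw [show (-(2*a)*τ) = -(2*a*τ) by ring, Real.exp_neg, ← div_eq_mul_inv,
      eq_div_iff hpos]
    linarith [hFτ']
  -- initial value
  have hE0 : E 0 = c * ⟪Δ 0, T (Δ 0)⟫ / 2 := by
    simp only [hE_def, hw_def, hinit]
    rw [show (0 : EuclideanSpace ℝ (Fin n)) + a • Δ 0 = a • Δ 0 by simp]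
    rw [real_inner_smul_left, real_inner_smul_right]
    ring
  have hq0 : 0 ≤ ⟪Δ 0, T (Δ 0)⟫ := le_trans (by positivity) (hlow (Δ 0))
  have hE0nn : 0 ≤ E 0 := by rw [hE0]; positivity
  -- pointwise coercivity: ⟪w,w⟫ ≤ 2 E
  have hwE : ∀ τ : ℝ, ⟪w τ, w τ⟫ ≤ 2 * E τ := by
    intro τ
    have h1 := hlow (Δ τ)
    have h2 : ⟪Δ τ, Δ τ⟫ = ‖Δ τ‖^2 := real_inner_self_eq_norm_sq (Δ τ)
    have h3 : 0 ≤ ⟪Δ τ, T (Δ τ)⟫ := le_trans (by positivity) h1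
    have h4 : lam0 / 2 * ‖Δ τ‖ ^ 2 ≤ c * ⟪Δ τ, T (Δ τ)⟫ :=
      le_trans h1 (le_mul_of_one_le_left h3 hc1)
    simp only [hE_def]
    rw [h2, ha2]
    linarith
  -- main bound on Δ via mean value
  intro t ht
  have key : ‖Δ t‖ ≤ Real.exp (-(a*t)) * (‖Δ 0‖ + Real.sqrt (2 * E 0) * t) := by
    set M : ℝ := Real.sqrt (2 * E 0) with hM_def
    set g : ℝ → EuclideanSpace ℝ (Fin n) := fun u => Real.exp (a*u) • Δ u with hg_def
    have hg' : ∀ u ∈ Set.Icc (0:ℝ) t,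
        HasDerivWithinAt g (Real.exp (a*u) • w u) (Set.Icc 0 t) u := by
      intro u hu
      have he : HasDerivAt (fun u : ℝ => Real.exp (a*u)) (Real.exp (a*u) * a) u := by
        simpa using ((hasDerivAt_id u).const_mul a).exp
      have hDτ : HasDerivAt Δ (D u) u := (hd1 u).hasDerivAt
      have h8 : HasDerivAt g (Real.exp (a*u) • D u + (Real.exp (a*u) * a) • Δ u) u :=
        he.smul hDτ
      have h9 : Real.exp (a*u) • D u + (Real.exp (a*u) * a) • Δ u
          = Real.exp (a*u) • w u := by
        simp only [hw_def, smul_add, smul_smul, mul_comm]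
      rw [h9] at h8
      exact h8.hasDerivWithinAt
    have hbound : ∀ u ∈ Set.Icc (0:ℝ) t, ‖Real.exp (a*u) • w u‖ ≤ M := by
      intro u hu
      have h1 : ‖w u‖^2 ≤ 2 * E u := by
        rw [← real_inner_self_eq_norm_sq]; exact hwE u
      have h3 : ‖w u‖ ≤ Real.sqrt (2 * E u) := Real.le_sqrt_of_sq_le h1
      have hx : Real.exp (-(2*a) * u) = (Real.exp (-(a*u)))^2 := by
        rw [sq, ← Real.exp_add]; ring_nf
      have h4 : Real.sqrt (2 * E u) = M * Real.exp (-(a*u)) := by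
        rw [hEeq u hu.1,
          show 2 * (E 0 * Real.exp (-(2*a) * u)) = (2 * E 0) * Real.exp (-(2*a)*u) by ring,
          hx, Real.sqrt_mul (by linarith), Real.sqrt_sq (Real.exp_nonneg _), hM_def]
      have h5 : ‖Real.exp (a*u) • w u‖ = Real.exp (a*u) * ‖w u‖ := by
        rw [norm_smul, Real.norm_eq_abs, abs_of_pos (Real.exp_pos _)]
      rw [h5]
      calc Real.exp (a*u) * ‖w u‖ ≤ Real.exp (a*u) * (M * Real.exp (-(a*u))) := by
            rw [← h4]; exact mul_le_mul_of_nonneg_left (h3.trans_eq h4 |>.trans_eq h4.symm) (Real.exp_nonneg _)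
        _ = M * (Real.exp (a*u) * Real.exp (-(a*u))) := by ring
        _ = M := by rw [← Real.exp_add]; simp
    have hmv := Convex.norm_image_sub_le_of_norm_hasDerivWithin_le hg' hbound
      (convex_Icc 0 t) (Set.left_mem_Icc.mpr ht) (Set.right_mem_Icc.mpr ht)
    have hg0 : g 0 = Δ 0 := by simp [hg_def]
    have hgt : ‖g t‖ ≤ ‖Δ 0‖ + M * t := by
      have h6 : ‖g t‖ - ‖g 0‖ ≤ ‖g t - g 0‖ := norm_sub_norm_le _ _
      have h7 : ‖t - (0:ℝ)‖ = t := by rw [sub_zero, Real.norm_eq_abs, abs_of_nonneg ht]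
      rw [h7] at hmv
      rw [hg0] at h6 hmv
      linarith [hmv]
    have hΔt : ‖Δ t‖ = Real.exp (-(a*t)) * ‖g t‖ := by
      have h8 : Δ t = Real.exp (-(a*t)) • g t := by
        rw [hg_def]; simp only [smul_smul, ← Real.exp_add]
        norm_num
      rw [h8, norm_smul, Real.norm_eq_abs, abs_of_pos (Real.exp_pos _)]
    rw [hΔt]
    exact mul_le_mul_of_nonneg_left hgt (Real.exp_nonneg _)
  -- final scalar computation
  set q0 : ℝ := ⟪Δ 0, T (Δ 0)⟫ with hq0_def
  set x0 : ℝ := ‖Δ 0‖ with hx0_def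
  set M : ℝ := Real.sqrt (2 * E 0) with hM_def
  set r : ℝ := Real.sqrt 2 with hr_def
  have hr2 : r^2 = 2 := Real.sq_sqrt (by norm_num)
  have hr1 : 1 ≤ r := by nlinarith [Real.sqrt_nonneg 2]
  have hM2 : M^2 = c * q0 := by
    rw [hM_def, Real.sq_sqrt (by linarith), hE0]; ring
  have hMnn : 0 ≤ M := Real.sqrt_nonneg _
  have hx0nn : 0 ≤ x0 := norm_nonneg _
  have hx02 : lam0 / 2 * x0^2 ≤ q0 := hlow (Δ 0)
  -- exponential series bound
  have hser : 1 + r*a*t + a^2*t^2 ≤ Real.exp (r*a*t) := by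
    have hx : (0:ℝ) ≤ r*a*t := by positivity
    have h := Real.sum_le_exp_of_nonneg hx 3
    simp [Finset.sum_range_succ] at h
    nlinarith [h, hr2]
  -- quadratic comparison
  have hquad : (x0 + M*t)^2 / 2 ≤ 3 * q0 / lam0 * (1 + r*a*t + a^2*t^2) := by
    have hq0nn : (0:ℝ) ≤ q0 := hq0
    have h1 : x0^2 / 2 ≤ q0 / lam0 := by
      rw [div_le_div_iff₀ (by norm_num) hlam0]; nlinarith
    have h2 : M^2 / 2 ≤ 3 * q0 / 2 := by nlinarith
    have hQnn : (0:ℝ) ≤ q0 / lam0 := by positivity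
    have hQ : q0 = (q0 / lam0) * lam0 := by field_simp
    have h3 : x0 * M ≤ 3 * r * (q0 / lam0) * a := by
      have e2 : x0^2 ≤ 2 * (q0/lam0) := by nlinarith [hx02, hlam0]
      have e4 : M^2 ≤ 3 * ((q0/lam0) * lam0) := by nlinarith [hM2, hc3, hq0nn]
      have hs1 : (x0*M)^2 ≤ (3 * r * (q0 / lam0) * a)^2 := by
        have er : (3 * r * (q0/lam0) * a)^2 = 9 * r^2 * (q0/lam0)^2 * a^2 := by ring
        rw [er, hr2, ha2]
        have e5 : x0^2 * M^2 ≤ (2 * (q0/lam0)) * (3 * ((q0/lam0) * lam0)) :=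
          mul_le_mul e2 e4 (sq_nonneg M) (by positivity)
        have e6 : (x0*M)^2 = x0^2*M^2 := by ring
        have e7 : (2 * (q0/lam0)) * (3 * ((q0/lam0) * lam0)) = 6*((q0/lam0)^2*lam0) := by
          ring
        have e8 : 9*2*(q0/lam0)^2*(lam0/2) = 9*((q0/lam0)^2*lam0) := by ring
        have e9 : (0:ℝ) ≤ (q0/lam0)^2*lam0 := by positivity
        rw [e6, e8]; rw [e7] at e5; linarith
      have h6 := Real.sqrt_le_sqrt hs1
      rwa [Real.sqrt_sq (mul_nonneg hx0nn hMnn),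
        Real.sqrt_sq (by positivity)] at h6
    have ht2 : (0:ℝ) ≤ t^2 := sq_nonneg t
    have expand : (x0 + M*t)^2 / 2 = x0^2/2 + x0*M*t + M^2/2 * t^2 := by ring
    have rhsexp : 3 * q0 / lam0 * (1 + r*a*t + a^2*t^2)
        = 3*q0/lam0 + (3*r*(q0/lam0)*a)*t + (3*q0/lam0*a^2)*t^2 := by ring
    have hc2 : M^2/2 * t^2 ≤ (3*q0/lam0*a^2)*t^2 := by
      have e10 : 3*q0/lam0*a^2 = 3*q0/2 := by rw [ha2]; field_simp
      rw [e10]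
      have e11 := mul_le_mul_of_nonneg_right h2 ht2
      linarith
    have hb2 : x0*M*t ≤ (3*r*(q0/lam0)*a)*t := mul_le_mul_of_nonneg_right h3 ht
    have ha1 : x0^2/2 ≤ 3*q0/lam0 := by
      have h12 : q0/lam0 ≤ 3*q0/lam0 := by
        rw [div_le_div_iff₀ hlam0 hlam0]; nlinarith
      linarith
    rw [expand, rhsexp]
    linarith
  -- put it together
  have hexp : Real.exp (-(2 - r) * a * t) = Real.exp (-(a*t))^2 * Real.exp (r*a*t) := by
    rw [sq, ← Real.exp_add, ← Real.exp_add]; ring_nf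
  have hgoal : 6 * ((1/2) * q0) / lam0 * Real.exp (-(2 - r) * a * t)
      = (3 * q0 / lam0 * Real.exp (r*a*t)) * Real.exp (-(a*t))^2 := by
    rw [hexp]; ring
  rw [show (6:ℝ) * (1 / 2 * q0) / lam0 * Real.exp (-(2 - r) * a * t)
      = (3 * q0 / lam0 * Real.exp (r*a*t)) * Real.exp (-(a*t))^2 from hgoal]
  have hkey2 : (1/2) * ‖Δ t‖^2 ≤ ((x0 + M*t)^2/2) * Real.exp (-(a*t))^2 := by
    have h10 : ‖Δ t‖^2 ≤ (Real.exp (-(a*t)) * (x0 + M*t))^2 := by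
      apply sq_le_sq' _ key
      have : 0 ≤ Real.exp (-(a*t)) * (x0 + M*t) := by positivity
      linarith [norm_nonneg (Δ t)]
    nlinarith [h10]
  calc (1/2) * ‖Δ t‖^2 ≤ ((x0 + M*t)^2/2) * Real.exp (-(a*t))^2 := hkey2
    _ ≤ (3 * q0 / lam0 * (1 + r*a*t + a^2*t^2)) * Real.exp (-(a*t))^2 := by
        apply mul_le_mul_of_nonneg_right hquad (by positivity)
    _ ≤ (3 * q0 / lam0 * Real.exp (r*a*t)) * Real.exp (-(a*t))^2 := by
        apply mul_le_mul_of_nonneg_right _ (by positivity)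
        apply mul_le_mul_of_nonneg_left hser (by positivity)
end

section
/- Let n be a positive integer, H a symmetric n×n real matrix, and λ0, λm, s positive reals with 0 < s ≤ 2/λm, such that (λ0/2)‖v‖² ≤ vᵀHv ≤ λm‖v‖² for all v ∈ ℝⁿ. Let Δ : ℝ → ℝⁿ be twice continuously differentiable and satisfy Δ''(t) + √(2λ0) Δ'(t) + (1 + √(λ0 s/2)) H Δ(t) = 0 for all t ≥ 0. Define the Lyapunov function V(t) := (1 + √(λ0 s/2)) L̂(t) + (1/4)‖Δ'(t)‖² + (1/4)‖Δ'(t) + √(2λ0) Δ(t)‖², where L̂(t) := (1/2) Δ(t)ᵀ H Δ(t). Then for all t ≥ 0, V(t) ≤ exp(−(2−√2) √(λ0/2) t) · V(0). -/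
set_option maxHeartbeats 1000000


open scoped RealInnerProductSpace

theorem hb_lyapunov_decay
    (n : ℕ) (hn : 0 < n) (H : Matrix (Fin n) (Fin n) ℝ) (hHsymm : H.IsSymm)
    (lam0 lamm s : ℝ) (hlam0 : 0 < lam0) (hlamm : 0 < lamm)
    (hs : 0 < s) (hs2 : s ≤ 2 / lamm)
    (hlow : ∀ v : EuclideanSpace ℝ (Fin n),
      lam0 / 2 * ‖v‖ ^ 2 ≤ ⟪v, Matrix.toEuclideanLin H v⟫)
    (hup : ∀ v : EuclideanSpace ℝ (Fin n),
      ⟪v, Matrix.toEuclideanLin H v⟫ ≤ lamm * ‖v‖ ^ 2)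
    (Δ : ℝ → EuclideanSpace ℝ (Fin n)) (hΔ : ContDiff ℝ 2 Δ)
    (hode : ∀ t : ℝ, 0 ≤ t →
      deriv (deriv Δ) t + Real.sqrt (2 * lam0) • deriv Δ t
        + (1 + Real.sqrt (lam0 * s / 2)) • Matrix.toEuclideanLin H (Δ t) = 0)
    (V : ℝ → ℝ)
    (hV : ∀ t : ℝ, V t =
      (1 + Real.sqrt (lam0 * s / 2)) * ((1 / 2) * ⟪Δ t, Matrix.toEuclideanLin H (Δ t)⟫)
        + (1 / 4) * ‖deriv Δ t‖ ^ 2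
        + (1 / 4) * ‖deriv Δ t + Real.sqrt (2 * lam0) • Δ t‖ ^ 2) :
    ∀ t : ℝ, 0 ≤ t →
      V t ≤ Real.exp (-(2 - Real.sqrt 2) * Real.sqrt (lam0 / 2) * t) * V 0 := by
  set a : ℝ := Real.sqrt (2 * lam0) with ha_def
  set μ : ℝ := 1 + Real.sqrt (lam0 * s / 2) with hμ_def
  have ha2 : a ^ 2 = 2 * lam0 := Real.sq_sqrt (by positivity)
  have ha_pos : 0 < a := Real.sqrt_pos.mpr (by positivity)
  have hμ1 : (1:ℝ) ≤ μ := le_add_of_nonneg_right (Real.sqrt_nonneg _)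
  set r : ℝ := Real.sqrt 2 with hr_def
  have hr2 : r ^ 2 = 2 := Real.sq_sqrt (by norm_num)
  have hr1 : (1:ℝ) ≤ r := by
    nlinarith [Real.sqrt_nonneg 2, hr2]
  have hrlt : r ≤ (3/2 : ℝ) := by
    nlinarith [Real.sqrt_nonneg 2, hr2]
  set c : ℝ := (2 - r) * Real.sqrt (lam0 / 2) with hc_def
  have hsqrt_half : Real.sqrt (lam0 / 2) = a / 2 := by
    have h : lam0 / 2 = (a/2)^2 := by rw [div_pow, ha2]; ring
    rw [h, Real.sqrt_sq (by positivity)]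
  have hc : c = (2 - r) * (a / 2) := by rw [hc_def, hsqrt_half]
  have hc_nonneg : 0 ≤ c := by rw [hc]; nlinarith
  have hac : c ≤ a / 2 := by rw [hc]; nlinarith
  have hrel : 2*c^2 - 4*a*c + a^2 = 0 := by
    rw [hc]; linear_combination (a^2/2) * hr2
  -- the operator as a continuous linear map
  set T : EuclideanSpace ℝ (Fin n) →L[ℝ] EuclideanSpace ℝ (Fin n) :=
    LinearMap.toContinuousLinearMap (Matrix.toEuclideanLin H) with hT_def
  have hTapp : ∀ v, Matrix.toEuclideanLin H v = T v := fun v => rfl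
  have hHherm : H.IsHermitian := by
    rw [Matrix.IsHermitian]
    ext i j
    have := congrFun (congrFun hHsymm i) j
    simpa [Matrix.conjTranspose_apply, Matrix.transpose_apply, Matrix.IsSymm] using
      congrFun (congrFun hHsymm i) j
  have hsym : ∀ v w : EuclideanSpace ℝ (Fin n), ⟪T v, w⟫ = ⟪v, T w⟫ := by
    intro v w
    exact (Matrix.isHermitian_iff_isSymmetric.mp hHherm) v w
  -- differentiability
  have h2 : ContDiff ℝ ((1:WithTop ℕ∞)+1) Δ := by
    have e : ((1:WithTop ℕ∞)+1) = ((2:ℕ) : WithTop ℕ∞) := by norm_cast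
    rw [e]; exact hΔ
  have hdiff : Differentiable ℝ Δ := (contDiff_succ_iff_deriv.mp h2).1
  have hcd1 : ContDiff ℝ (1:ℕ) (deriv Δ) := (contDiff_succ_iff_deriv.mp h2).2.2
  have hdiff1 : Differentiable ℝ (deriv Δ) := hcd1.differentiable (by norm_num)
  have hΔd : ∀ t, HasDerivAt Δ (deriv Δ t) t := fun t => (hdiff t).hasDerivAt
  have hD1d : ∀ t, HasDerivAt (deriv Δ) (deriv (deriv Δ) t) t := fun t => (hdiff1 t).hasDerivAt
  set D1 : ℝ → EuclideanSpace ℝ (Fin n) := deriv Δ with hD1_def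
  set D2 : ℝ → EuclideanSpace ℝ (Fin n) := deriv (deriv Δ) with hD2_def
  -- the derivative of V
  set W : ℝ → ℝ := fun t =>
    (μ/2) * (⟪Δ t, T (D1 t)⟫ + ⟪D1 t, T (Δ t)⟫)
    + (1/4) * (⟪D1 t, D2 t⟫ + ⟪D2 t, D1 t⟫)
    + (1/4) * (⟪D1 t + a • Δ t, D2 t + a • D1 t⟫ + ⟪D2 t + a • D1 t, D1 t + a • Δ t⟫)
    with hW_def
  have hVeq : V = fun t => (μ/2) * ⟪Δ t, T (Δ t)⟫ + (1/4) * ⟪D1 t, D1 t⟫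
      + (1/4) * ⟪D1 t + a • Δ t, D1 t + a • Δ t⟫ := by
    funext t
    rw [hV t, real_inner_self_eq_norm_sq, real_inner_self_eq_norm_sq, hTapp]
    ring
  have hVD : ∀ t, HasDerivAt V (W t) t := by
    intro t
    have hTd : HasDerivAt (fun t => T (Δ t)) (T (D1 t)) t :=
      T.hasFDerivAt.comp_hasDerivAt t (hΔd t)
    have hGd : HasDerivAt (fun t => D1 t + a • Δ t) (D2 t + a • D1 t) t :=
      (hD1d t).add ((hΔd t).const_smul a)
    have h1 : HasDerivAt (fun t => ⟪Δ t, T (Δ t)⟫)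
        (⟪Δ t, T (D1 t)⟫ + ⟪D1 t, T (Δ t)⟫) t := HasDerivAt.inner ℝ (hΔd t) hTd
    have h2' : HasDerivAt (fun t => ⟪D1 t, D1 t⟫)
        (⟪D1 t, D2 t⟫ + ⟪D2 t, D1 t⟫) t := HasDerivAt.inner ℝ (hD1d t) (hD1d t)
    have h3 : HasDerivAt (fun t => ⟪D1 t + a • Δ t, D1 t + a • Δ t⟫)
        (⟪D1 t + a • Δ t, D2 t + a • D1 t⟫ + ⟪D2 t + a • D1 t, D1 t + a • Δ t⟫) t :=
      HasDerivAt.inner ℝ hGd hGd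
    have := ((h1.const_mul (μ/2)).add (h2'.const_mul (1/4))).add (h3.const_mul (1/4))
    rw [hVeq]
    exact this
  -- value of W for t ≥ 0 via the ODE
  have hWval : ∀ t : ℝ, 0 ≤ t →
      W t = -((a/2) * ⟪D1 t, D1 t⟫ + (a*μ/2) * ⟪Δ t, T (Δ t)⟫) := by
    intro t ht
    have hD2eq : D2 t = -(a • D1 t) - μ • T (Δ t) := by
      have h0 := hode t ht
      rw [hTapp] at h0
      have : D2 t + a • D1 t + μ • T (Δ t) = 0 := h0
      linear_combination (norm := abel) this
    have e1 : ⟪Δ t, T (D1 t)⟫ = ⟪D1 t, T (Δ t)⟫ := by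
      rw [← hsym (Δ t) (D1 t), real_inner_comm]
    simp only [hW_def, hD2eq, e1]
    have hsum : -(a • D1 t) - μ • T (Δ t) + a • D1 t = -(μ • T (Δ t)) := by abel
    rw [hsum]
    simp only [inner_sub_left, inner_sub_right, inner_add_left, inner_add_right,
      inner_neg_left, inner_neg_right, real_inner_smul_left, real_inner_smul_right]
    rw [real_inner_comm (T (Δ t)) (D1 t), real_inner_comm (T (Δ t)) (Δ t)]
    ring
  -- key differential inequality: c * V t + W t ≤ 0 for t ≥ 0
  have hkey : ∀ t : ℝ, 0 ≤ t → c * V t + W t ≤ 0 := by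
    intro t ht
    rw [hWval t ht, hVeq]
    beta_reduce
    set x : ℝ := ‖D1 t‖ with hx_def
    set y : ℝ := ‖Δ t‖ with hy_def
    set z : ℝ := ⟪D1 t, Δ t⟫ with hz_def
    set P : ℝ := ⟪Δ t, T (Δ t)⟫ with hP_def
    have hxx : ⟪D1 t, D1 t⟫ = x^2 := real_inner_self_eq_norm_sq _
    have hGG : ⟪D1 t + a • Δ t, D1 t + a • Δ t⟫ = x^2 + 2*a*z + a^2*y^2 := by
      rw [real_inner_self_eq_norm_sq, norm_add_sq_real, real_inner_smul_right,
        norm_smul, Real.norm_eq_abs, abs_of_pos ha_pos, mul_pow]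
      ring
    have hz : z ≤ x * y := real_inner_le_norm _ _
    have hPlow : a^2/4 * y^2 ≤ P := by
      have := hlow (Δ t)
      rw [hTapp] at this
      rw [ha2]
      calc 2*lam0/4 * y^2 = lam0/2 * ‖Δ t‖^2 := by rw [hy_def]; ring
        _ ≤ P := this
    have hy0 : 0 ≤ y := norm_nonneg _
    have hP0 : 0 ≤ P := le_trans (by positivity) hPlow
    rw [hxx, hGG]
    -- the sharp quadratic inequality
    have hQ : 0 ≤ (a-c)/2 * x^2 + (a-3*c)*a^2/8 * y^2 - c*a/2*(x*y) := by
      have hid : 2*(a-c) * ((a-c)/2 * x^2 + (a-3*c)*a^2/8 * y^2 - c*a/2*(x*y))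
          = ((a-c)*x - (c*a/2)*y)^2 := by
        linear_combination (a^2*y^2/4) * hrel
      have hpos : 0 < 2*(a-c) := by nlinarith
      nlinarith [sq_nonneg ((a-c)*x - (c*a/2)*y), hid]
    have f1 : c*a/2*z ≤ c*a/2*(x*y) :=
      mul_le_mul_of_nonneg_left hz (by positivity)
    have f2 : 0 ≤ (a-c)/2 * ((μ-1) * P) := by
      apply mul_nonneg (by nlinarith) (mul_nonneg (by linarith) hP0)
    have f3 : 0 ≤ (a-c)/2 * (P - a^2/4*y^2) := by
      apply mul_nonneg (by nlinarith) (by linarith)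
    nlinarith [hQ, f1, f2, f3]
  -- Gronwall
  have hgd : ∀ t, HasDerivAt (fun t => Real.exp (c*t) * V t)
      (Real.exp (c*t) * (c * V t + W t)) t := by
    intro t
    have h1 : HasDerivAt (fun u : ℝ => Real.exp (c*u)) (Real.exp (c*t) * c) t := by
      simpa using ((hasDerivAt_id t).const_mul c).exp
    have := h1.mul (hVD t)
    refine this.congr_deriv ?_
    ring
  have hanti : AntitoneOn (fun t => Real.exp (c*t) * V t) (Set.Ici 0) := by
    apply antitoneOn_of_deriv_nonpos (convex_Ici 0)
    · exact fun t _ => ((hgd t).continuousAt).continuousWithinAt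
    · exact fun t _ => ((hgd t).differentiableAt).differentiableWithinAt
    · intro t ht
      rw [interior_Ici] at ht
      rw [(hgd t).deriv]
      have := hkey t (le_of_lt ht)
      have he : 0 ≤ Real.exp (c*t) := (Real.exp_pos _).le
      exact mul_nonpos_of_nonneg_of_nonpos he this
  intro t ht
  have h0 : (0:ℝ) ∈ Set.Ici (0:ℝ) := Set.self_mem_Ici
  have hmem : t ∈ Set.Ici (0:ℝ) := ht
  have := hanti h0 hmem ht
  simp only [mul_zero, Real.exp_zero, one_mul] at this
  have hexp : Real.exp (-(2 - Real.sqrt 2) * Real.sqrt (lam0 / 2) * t)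
      = Real.exp (-(c*t)) := by
    rw [hc_def, hr_def]; ring_nf
  rw [hexp]
  have he : 0 < Real.exp (c*t) := Real.exp_pos _
  have h3 : V t = (Real.exp (c*t))⁻¹ * (Real.exp (c*t) * V t) := by
    field_simp
  rw [Real.exp_neg, h3]
  exact mul_le_mul_of_nonneg_left this (by positivity)
end

section
/- Let n be a positive integer, H a symmetric n×n real matrix, and λ0, s positive reals. Let Δ : ℝ → ℝⁿ be twice continuously differentiable and satisfy Δ''(t) + √(2λ0) Δ'(t) + (1 + √(λ0 s/2)) H Δ(t) = 0 for all t. Define V(t) := (1 + √(λ0 s/2)) L̂(t) + (1/4)‖Δ'(t)‖² + (1/4)‖Δ'(t) + √(2λ0) Δ(t)‖², where L̂(t) := (1/2) Δ(t)ᵀ H Δ(t). Then for all t, V is differentiable with V'(t) = −√(λ0/2) · ( ‖Δ'(t)‖² + (1 + √(λ0 s/2)) · Δ(t)ᵀ H Δ(t) ). -/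
open scoped RealInnerProductSpace

theorem hb_lyapunov_derivative
    (n : ℕ) (hn : 0 < n) (H : Matrix (Fin n) (Fin n) ℝ) (hHsymm : H.IsSymm)
    (lam0 s : ℝ) (hlam0 : 0 < lam0) (hs : 0 < s)
    (Δ : ℝ → EuclideanSpace ℝ (Fin n)) (hΔ : ContDiff ℝ 2 Δ)
    (hode : ∀ t : ℝ,
      deriv (deriv Δ) t + Real.sqrt (2 * lam0) • deriv Δ t
        + (1 + Real.sqrt (lam0 * s / 2)) • Matrix.toEuclideanLin H (Δ t) = 0) :
    ∀ t : ℝ,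
      HasDerivAt (fun τ : ℝ =>
        (1 + Real.sqrt (lam0 * s / 2)) * ((1 / 2) * ⟪Δ τ, Matrix.toEuclideanLin H (Δ τ)⟫)
          + (1 / 4) * ‖deriv Δ τ‖ ^ 2
          + (1 / 4) * ‖deriv Δ τ + Real.sqrt (2 * lam0) • Δ τ‖ ^ 2)
        (-(Real.sqrt (lam0 / 2)) *
          (‖deriv Δ t‖ ^ 2
            + (1 + Real.sqrt (lam0 * s / 2)) * ⟪Δ t, Matrix.toEuclideanLin H (Δ t)⟫))
        t := by
  intro t
  set a := Real.sqrt (2 * lam0) with ha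
  set c := 1 + Real.sqrt (lam0 * s / 2) with hc
  set L : EuclideanSpace ℝ (Fin n) →L[ℝ] EuclideanSpace ℝ (Fin n) :=
    LinearMap.toContinuousLinearMap (Matrix.toEuclideanLin H) with hL
  have hLapp : ∀ v, L v = Matrix.toEuclideanLin H v := fun v => rfl
  -- symmetry
  have hherm : H.IsHermitian := by
    rw [Matrix.IsHermitian, Matrix.conjTranspose_eq_transpose_of_trivial]; exact hHsymm
  have hsym : ∀ x y : EuclideanSpace ℝ (Fin n), ⟪Matrix.toEuclideanLin H x, y⟫ = ⟪x, Matrix.toEuclideanLin H y⟫ :=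
    Matrix.isHermitian_iff_isSymmetric.mp hherm
  -- differentiability
  have hΔ1 : Differentiable ℝ Δ := hΔ.differentiable (by norm_num)
  have hd1 : ContDiff ℝ 1 (deriv Δ) := by
    have := (contDiff_succ_iff_deriv (n := 1)).mp (by exact_mod_cast hΔ)
    exact this.2.2
  have hΔt : HasDerivAt Δ (deriv Δ t) t := (hΔ1 t).hasDerivAt
  have hdt : HasDerivAt (deriv Δ) (deriv (deriv Δ) t) t :=
    ((hd1.differentiable (by norm_num)) t).hasDerivAt
  have h := hode t
  set x := Δ t
  set d := deriv Δ t
  set d2 := deriv (deriv Δ) t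
  have hode' : d2 = -(a • d) - c • (L x) := by
    rw [add_assoc, add_eq_zero_iff_eq_neg] at h
    rw [hLapp, h]; abel
  -- derivative pieces
  have hA : HasDerivAt (fun τ => ⟪Δ τ, Matrix.toEuclideanLin H (Δ τ)⟫)
      (⟪x, L d⟫ + ⟪d, L x⟫) t := by
    have hLd : HasDerivAt (fun τ => L (Δ τ)) (L d) t := L.hasFDerivAt.comp_hasDerivAt t hΔt
    simpa [hLapp] using hΔt.inner ℝ hLd
  have hB : HasDerivAt (fun τ => ⟪deriv Δ τ, deriv Δ τ⟫) (⟪d, d2⟫ + ⟪d2, d⟫) t :=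
    hdt.inner ℝ hdt
  have hCf : HasDerivAt (fun τ => deriv Δ τ + a • Δ τ) (d2 + a • d) t :=
    hdt.add (hΔt.const_smul a)
  have hC : HasDerivAt (fun τ => ⟪deriv Δ τ + a • Δ τ, deriv Δ τ + a • Δ τ⟫)
      (⟪d + a • x, d2 + a • d⟫ + ⟪d2 + a • d, d + a • x⟫) t := hCf.inner ℝ hCf
  have hV : HasDerivAt (fun τ : ℝ =>
        c * ((1 / 2) * ⟪Δ τ, Matrix.toEuclideanLin H (Δ τ)⟫)
          + (1 / 4) * ⟪deriv Δ τ, deriv Δ τ⟫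
          + (1 / 4) * ⟪deriv Δ τ + a • Δ τ, deriv Δ τ + a • Δ τ⟫)
      (c * ((1 / 2) * (⟪x, L d⟫ + ⟪d, L x⟫))
          + (1 / 4) * (⟪d, d2⟫ + ⟪d2, d⟫)
          + (1 / 4) * (⟪d + a • x, d2 + a • d⟫ + ⟪d2 + a • d, d + a • x⟫)) t := by
    exact (((hA.const_mul (1/2)).const_mul c).add (hB.const_mul (1/4))).add (hC.const_mul (1/4))
  -- match function
  have hfun : (fun τ : ℝ =>
        c * ((1 / 2) * ⟪Δ τ, Matrix.toEuclideanLin H (Δ τ)⟫)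
          + (1 / 4) * ⟪deriv Δ τ, deriv Δ τ⟫
          + (1 / 4) * ⟪deriv Δ τ + a • Δ τ, deriv Δ τ + a • Δ τ⟫)
      = (fun τ : ℝ =>
        c * ((1 / 2) * ⟪Δ τ, Matrix.toEuclideanLin H (Δ τ)⟫)
          + (1 / 4) * ‖deriv Δ τ‖ ^ 2
          + (1 / 4) * ‖deriv Δ τ + a • Δ τ‖ ^ 2) := by
    funext τ
    rw [real_inner_self_eq_norm_sq, real_inner_self_eq_norm_sq]
  rw [hfun] at hV
  -- match value
  have ha2 : a = 2 * Real.sqrt (lam0 / 2) := by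
    rw [ha, show 2 * lam0 = 2 ^ 2 * (lam0 / 2) by ring, Real.sqrt_mul (by positivity),
      Real.sqrt_sq (by norm_num)]
  convert hV using 1
  have h4 : d2 + a • d = -(c • L x) := by rw [hode']; abel
  rw [h4, hode']
  have e1 : (inner ℝ (L x) x : ℝ) = inner ℝ x (L x) := real_inner_comm _ _
  have e2 : (inner ℝ (L x) d : ℝ) = inner ℝ x (L d) := hsym x d
  have e3 : (inner ℝ d (L x) : ℝ) = inner ℝ x (L d) := by rw [real_inner_comm]; exact hsym x d
  have h2 : ‖d‖ ^ 2 = (inner ℝ d d : ℝ) := (real_inner_self_eq_norm_sq d).symm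
  have h3 : (inner ℝ x (Matrix.toEuclideanLin H x) : ℝ) = inner ℝ x (L x) := rfl
  rw [h2, h3, ha2]
  simp only [inner_add_left, inner_add_right, inner_neg_left, inner_neg_right,
    inner_smul_left, inner_smul_right, inner_sub_left, inner_sub_right,
    RCLike.star_def, starRingEnd_apply, star_trivial, e1, e2, e3]
  ring
end

section
/- The supremum over all real φ > 0 and all z with 0 ≤ z ≤ 1 of the quantity min{ 2z, 4/(2 + 1/φ), (1−z)/(1+φ) } equals 2 − √2. -/
theorem hb_rate_optimization :
    sSup {x : ℝ | ∃ φ z : ℝ, 0 < φ ∧ 0 ≤ z ∧ z ≤ 1 ∧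
        x = min (2 * z) (min (4 / (2 + 1 / φ)) ((1 - z) / (1 + φ)))} =
      2 - Real.sqrt 2 := by
  have hs : Real.sqrt 2 ^ 2 = 2 := Real.sq_sqrt (by norm_num)
  have hs1 : 1 < Real.sqrt 2 := by nlinarith [Real.sqrt_nonneg 2]
  have hs2 : Real.sqrt 2 < 2 := by nlinarith [Real.sqrt_nonneg 2]
  set s := Real.sqrt 2 with hsdef
  set S := {x : ℝ | ∃ φ z : ℝ, 0 < φ ∧ 0 ≤ z ∧ z ≤ 1 ∧
      x = min (2 * z) (min (4 / (2 + 1 / φ)) ((1 - z) / (1 + φ)))} with hS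
  have hub : ∀ x ∈ S, x ≤ 2 - s := by
    rintro x ⟨φ, z, hφ, hz0, hz1, rfl⟩
    by_contra h
    push_neg at h
    have h1 : 2 - s < 2 * z := lt_of_lt_of_le h (min_le_left _ _)
    have h2 : 2 - s < 4 / (2 + 1 / φ) :=
      lt_of_lt_of_le h ((min_le_right _ _).trans (min_le_left _ _))
    have h3 : 2 - s < (1 - z) / (1 + φ) :=
      lt_of_lt_of_le h ((min_le_right _ _).trans (min_le_right _ _))
    have hden : 0 < 2 + 1 / φ := by positivity
    have hden2 : (0:ℝ) < 1 + φ := by linarith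
    rw [lt_div_iff₀ hden] at h2
    rw [lt_div_iff₀ hden2] at h3
    have h2' : (2 - s) * (2 * φ + 1) < 4 * φ := by
      have hc : (2 + 1 / φ) * φ = 2 * φ + 1 := by field_simp
      rw [← hc, ← mul_assoc]
      exact mul_lt_mul_of_pos_right h2 hφ
    nlinarith [h2', h3, h1, mul_pos hφ hφ]
  have hmem : 2 - s ∈ S := by
    refine ⟨(s - 1) / 2, 1 / (2 + s), by nlinarith, by positivity, ?_, ?_⟩
    · rw [div_le_one (by nlinarith)]; nlinarith
    · have hne : (2:ℝ) + s ≠ 0 := by nlinarith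
      have hA : 2 * (1 / (2 + s)) = 2 - s := by
        field_simp
        nlinarith
      have hB : 4 / (2 + 1 / ((s - 1) / 2)) = 2 - s := by
        have hne1 : s - 1 ≠ 0 := by nlinarith
        rw [div_eq_iff]
        · field_simp
          nlinarith
        · have : (0:ℝ) < (s-1)/2 := by nlinarith
          positivity
      have hC : (1 - 1 / (2 + s)) / (1 + (s - 1) / 2) = 2 - s := by
        rw [div_eq_iff (by nlinarith)]
        field_simp
        nlinarith
      rw [hA, hB, hC, min_self, min_self]
  exact le_antisymm (Real.sSup_le hub (by nlinarith)) (le_csSup ⟨2 - s, hub⟩ hmem)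
end

section
/- For every real α with 0 < α ≤ 1/2, the supremum over all real φ > 0 of min{ 2/(3 + 2φ), 4(1 + α)/(2 + 1/φ), 4/(1 + φ) } equals (1/2) · (4 + 3α − √(8 + 16α + 9α²)). -/
theorem nag_rate_optimization (α : ℝ) (hα0 : 0 < α) (hα1 : α ≤ 1 / 2) :
    sSup {x : ℝ | ∃ φ : ℝ, 0 < φ ∧
        x = min (2 / (3 + 2 * φ)) (min (4 * (1 + α) / (2 + 1 / φ)) (4 / (1 + φ)))} =
      (1 / 2) * (4 + 3 * α - Real.sqrt (8 + 16 * α + 9 * α ^ 2)) := by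
  set s := Real.sqrt (8 + 16 * α + 9 * α ^ 2) with hs
  have h8 : (0:ℝ) ≤ 8 + 16 * α + 9 * α ^ 2 := by nlinarith
  have hs2 : s ^ 2 = 8 + 16 * α + 9 * α ^ 2 := Real.sq_sqrt h8
  have hsgt : 2 + 3 * α < s := by
    rw [hs]
    rw [show (2 + 3*α : ℝ) = Real.sqrt ((2+3*α)^2) from
      (Real.sqrt_sq (by linarith)).symm]
    apply Real.sqrt_lt_sqrt (by positivity)
    nlinarith
  have hslt : s < 4 + 3 * α := by
    rw [hs]
    apply Real.sqrt_lt' (by linarith) |>.mpr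
    nlinarith
  set ρ := (1/2 : ℝ) * (4 + 3 * α - s) with hρ
  have hρpos : 0 < ρ := by rw [hρ]; linarith
  set φ := (s - (2 + 3 * α)) / (4 * (1 + α)) with hφdef
  have hφpos : 0 < φ := by
    apply div_pos (by linarith) (by linarith)
  have hφ4 : 4 * (1 + α) * φ = s - (2 + 3 * α) := by
    rw [hφdef]; field_simp
  have h4pos : (0:ℝ) < 4 * (1 + α) := by linarith
  -- key product identity: (s + α) * φ = ρ
  have hE : (s + α) * φ = ρ := by
    apply mul_right_cancel₀ (ne_of_gt h4pos)
    calc (s + α) * φ * (4 * (1 + α)) = (s + α) * (4 * (1 + α) * φ) := by ring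
      _ = (s + α) * (s - (2 + 3 * α)) := by rw [hφ4]
      _ = ρ * (4 * (1 + α)) := by rw [hρ]; linear_combination hs2
  -- value of f1 at φ : ρ * (3 + 2φ) = 2
  have h1' : ρ * (3 + 2 * φ) = 2 := by
    apply mul_right_cancel₀ (ne_of_gt h4pos)
    calc ρ * (3 + 2 * φ) * (4 * (1 + α))
        = ρ * (12 * (1 + α) + 2 * (4 * (1 + α) * φ)) := by ring
      _ = ρ * (12 * (1 + α) + 2 * (s - (2 + 3 * α))) := by rw [hφ4]
      _ = 2 * (4 * (1 + α)) := by rw [hρ]; linear_combination (-(1:ℝ)) * hs2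
  -- value of f2 at φ : ρ * (2φ + 1) = 4(1+α)φ
  have h2' : ρ * (2 * φ + 1) = 4 * (1 + α) * φ := by
    apply mul_right_cancel₀ (ne_of_gt h4pos)
    calc ρ * (2 * φ + 1) * (4 * (1 + α))
        = ρ * (2 * (4 * (1 + α) * φ) + 4 * (1 + α)) := by ring
      _ = ρ * (2 * (s - (2 + 3 * α)) + 4 * (1 + α)) := by rw [hφ4]
      _ = 4 * (1 + α) * φ * (4 * (1 + α)) := by
          rw [hρ, hφ4]; linear_combination (-(1:ℝ)) * hs2
  have hρφ : ρ * φ = (1/2) * (4 + 3 * α - s) * φ := by rw [hρ]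
  apply IsGreatest.csSup_eq
  constructor
  · -- membership
    refine ⟨φ, hφpos, ?_⟩
    have h1 : 2 / (3 + 2 * φ) = ρ := by
      rw [div_eq_iff (by linarith)]; linarith [h1']
    have h2 : 4 * (1 + α) / (2 + 1 / φ) = ρ := by
      rw [div_eq_iff (by positivity)]
      apply mul_right_cancel₀ (ne_of_gt hφpos)
      have hh : ρ * (2 + 1 / φ) * φ = ρ * (2 * φ + 1) := by
        field_simp
      rw [hh, h2']
    have h3 : ρ ≤ 4 / (1 + φ) := by
      rw [le_div_iff₀ (by linarith)]
      have hint : 0 ≤ (s - (2 + 3 * α)) * φ := by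
        apply mul_nonneg (by linarith) hφpos.le
      have hαφ : 0 ≤ α * φ := mul_nonneg hα0.le hφpos.le
      nlinarith [hρφ, hφ4, hsgt, hslt, hint, hαφ]
    rw [h1, h2, min_eq_left h3, min_self]
  · -- upper bound
    rintro x ⟨ψ, hψ, rfl⟩
    have hρψ : ρ * ψ = (1/2) * (4 + 3 * α - s) * ψ := by rw [hρ]
    rcases le_total ψ φ with hle | hle
    · refine le_trans (le_trans (min_le_right _ _) (min_le_left _ _)) ?_
      rw [div_le_iff₀ (by positivity)]
      have key : 4 * (1 + α) * ψ ≤ ρ * (2 * ψ + 1) := by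
        have hint : 0 ≤ (s + α) * (φ - ψ) := by
          apply mul_nonneg (by linarith) (by linarith)
        nlinarith [hρψ, hE, hint]
      have hexp : ρ * (2 + 1 / ψ) * ψ = ρ * (2 * ψ + 1) := by field_simp
      have : 4 * (1 + α) * ψ ≤ ρ * (2 + 1 / ψ) * ψ := by rw [hexp]; exact key
      have h2 : 4 * (1 + α) * ψ ≤ ρ * (2 + 1 / ψ) * ψ := this
      exact (mul_le_mul_iff_of_pos_right hψ).mp h2
    · refine le_trans (min_le_left _ _) ?_
      rw [div_le_iff₀ (by linarith)]
      have hint : 0 ≤ (4 + 3 * α - s) * (ψ - φ) := by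
        apply mul_nonneg (by linarith) (by linarith)
      nlinarith [hρψ, hρφ, h1', hint]
end

section
/- For every real α with 0 < α ≤ 1/2, the quantity ρ*_NAG(α) := (1/2) · (4 + 3α − √(8 + 16α + 9α²)) satisfies 2 − √2 < ρ*_NAG(α) ≤ (11 − √73)/4. In particular, ρ*_NAG(α) strictly exceeds the heavy-ball rate constant 2 − √2. -/
theorem nag_rate_exceeds_hb_rate (α : ℝ) (hα0 : 0 < α) (hα1 : α ≤ 1 / 2) :
    2 - Real.sqrt 2 < (1 / 2) * (4 + 3 * α - Real.sqrt (8 + 16 * α + 9 * α ^ 2)) ∧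
      (1 / 2) * (4 + 3 * α - Real.sqrt (8 + 16 * α + 9 * α ^ 2)) ≤
        (11 - Real.sqrt 73) / 4 := by
  have hD : (0:ℝ) ≤ 8 + 16 * α + 9 * α ^ 2 := by nlinarith
  set sD := Real.sqrt (8 + 16 * α + 9 * α ^ 2) with hsDdef
  have hsD2 : sD ^ 2 = 8 + 16 * α + 9 * α ^ 2 := Real.sq_sqrt hD
  have hsD0 : 0 ≤ sD := Real.sqrt_nonneg _
  have h2 : Real.sqrt 2 ^ 2 = 2 := Real.sq_sqrt (by norm_num)
  have h73 : Real.sqrt 73 ^ 2 = 73 := Real.sq_sqrt (by norm_num)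
  have hs2 : (4:ℝ)/3 < Real.sqrt 2 := by
    nlinarith [Real.sqrt_nonneg 2, h2]
  have hs73 : (25:ℝ)/3 < Real.sqrt 73 := by
    nlinarith [Real.sqrt_nonneg 73, h73]
  constructor
  · have key : sD < 3 * α + 2 * Real.sqrt 2 := by
      nlinarith [mul_pos hα0 (by linarith : (0:ℝ) < 3 * Real.sqrt 2 - 4),
        Real.sqrt_nonneg 2]
    linarith
  · have key : 6 * α - 3 + Real.sqrt 73 ≤ 2 * sD := by
      have hr : (0:ℝ) < 6 * α - 3 + Real.sqrt 73 := by linarith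
      nlinarith [mul_nonneg (by linarith : (0:ℝ) ≤ 6 * Real.sqrt 73 - 50)
        (by linarith : (0:ℝ) ≤ 1 - 2 * α), hr, hsD0]
    linarith
end

section
/- The supremum over all real φ > 0 of min{ 2/(3 + 2φ), 4/(2 + 1/φ), 4/(1 + φ) } equals 2 − √2. -/
theorem nag_rate_without_gradient_correction :
    sSup {x : ℝ | ∃ φ : ℝ, 0 < φ ∧
        x = min (2 / (3 + 2 * φ)) (min (4 / (2 + 1 / φ)) (4 / (1 + φ)))} =
      2 - Real.sqrt 2 := by
  have hs0 : (0:ℝ) ≤ Real.sqrt 2 := Real.sqrt_nonneg 2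
  have h2 : Real.sqrt 2 ^ 2 = 2 := Real.sq_sqrt (by norm_num)
  set s := Real.sqrt 2 with hs
  have h1 : 1 < s := by nlinarith
  have hlt : s < 2 := by nlinarith
  apply IsGreatest.csSup_eq
  constructor
  · refine ⟨(s - 1) / 2, by linarith, ?_⟩
    have hφ : (0:ℝ) < (s - 1) / 2 := by linarith
    have hA : 3 + 2 * ((s - 1) / 2) = 2 + s := by ring
    have hB : (2:ℝ) / (2 + s) = 2 - s := by
      rw [div_eq_iff (by linarith)]; nlinarith
    have hinv : 1 / ((s - 1) / 2) = 2 * (s + 1) := by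
      rw [eq_comm, eq_div_iff (by positivity)]
      nlinarith
    have hC : (4:ℝ) / (2 + 1 / ((s - 1) / 2)) = 2 - s := by
      rw [hinv, div_eq_iff (by nlinarith)]; nlinarith
    have hD : (2:ℝ) - s ≤ 4 / (1 + (s - 1) / 2) := by
      rw [le_div_iff₀ (by linarith)]; nlinarith
    rw [hA, hB, hC, min_eq_left hD, min_self]
  · rintro x ⟨φ, hφ, rfl⟩
    rcases le_or_gt φ ((s - 1) / 2) with h | h
    · have hu0 : 0 < 1 / φ := by positivity
      have hu : φ * (1 / φ) = 1 := by field_simp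
      have : (4:ℝ) / (2 + 1 / φ) ≤ 2 - s := by
        rw [div_le_iff₀ (by linarith)]
        nlinarith [mul_le_mul_of_nonneg_right h (le_of_lt hu0)]
      exact le_trans (le_trans (min_le_right _ _) (min_le_left _ _)) this
    · have : (2:ℝ) / (3 + 2 * φ) ≤ 2 - s := by
        rw [div_le_iff₀ (by linarith)]
        nlinarith
      exact le_trans (min_le_left _ _) this
end

section
/- Let n be a positive integer, H a symmetric n×n real matrix, and λ0, λm, s positive reals with 0 < s ≤ 2/λm, such that (3λ0/4)‖v‖² ≤ vᵀHv ≤ λm‖v‖² for all v ∈ ℝⁿ. Let Δ : ℝ → ℝⁿ be twice continuously differentiable and satisfy the Nesterov residual dynamics Δ''(t) + √(2λ0) Δ'(t) + √s H Δ'(t) + (1 + √(λ0 s/2)) H Δ(t) = 0 for all t ≥ 0, with Δ'(0) = 0. Set α := √(2 λ0 s)/4 and ρ*_NAG(α) := (1/2)(4 + 3α − √(8 + 16α + 9α²)). Then for all t ≥ 0, the loss L(t) := (1/2)‖Δ(t)‖² satisfies L(t) ≤ (26 L̂(0)/(3 λ0)) · exp(−ρ*_NAG(α) √(λ0/2) t),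 where L̂(0) := (1/2) Δ(0)ᵀ H Δ(0). -/
open scoped RealInnerProductSpace

lemma rho_facts (a ρ : ℝ) (ha : 0 < a)
    (hρ : ρ = (4 + 3*a - Real.sqrt (8 + 16*a + 9*a^2)) / 2) :
    ρ^2 = (4 + 3*a)*ρ - (2 + 2*a) ∧ 1/2 < ρ ∧ ρ < 1 := by
  have hD : (0:ℝ) ≤ 8 + 16*a + 9*a^2 := by positivity
  have hsq : Real.sqrt (8 + 16*a + 9*a^2) ^ 2 = 8 + 16*a + 9*a^2 := Real.sq_sqrt hD
  refine ⟨by rw [hρ]; nlinarith [hsq], ?_, ?_⟩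
  · have h1 : Real.sqrt (8 + 16*a + 9*a^2) < 3 + 3*a := by
      rw [show (3:ℝ) + 3*a = Real.sqrt ((3+3*a)^2) from (Real.sqrt_sq (by linarith)).symm]
      exact Real.sqrt_lt_sqrt hD (by nlinarith)
    rw [hρ]; linarith
  · have h2 : 2 + 3*a < Real.sqrt (8 + 16*a + 9*a^2) := by
      rw [show (2:ℝ) + 3*a = Real.sqrt ((2+3*a)^2) from (Real.sqrt_sq (by linarith)).symm]
      exact Real.sqrt_lt_sqrt (by positivity) (by nlinarith)
    rw [hρ]; linarith

set_option maxHeartbeats 1000000 in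
theorem nag_loss_convergence
    (n : ℕ) (hn : 0 < n) (H : Matrix (Fin n) (Fin n) ℝ) (hHsymm : H.IsSymm)
    (lam0 lamm s : ℝ) (hlam0 : 0 < lam0) (hlamm : 0 < lamm)
    (hs : 0 < s) (hs2 : s ≤ 2 / lamm)
    (hlow : ∀ v : EuclideanSpace ℝ (Fin n),
      3 * lam0 / 4 * ‖v‖ ^ 2 ≤ ⟪v, Matrix.toEuclideanLin H v⟫)
    (hup : ∀ v : EuclideanSpace ℝ (Fin n),
      ⟪v, Matrix.toEuclideanLin H v⟫ ≤ lamm * ‖v‖ ^ 2)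
    (Δ : ℝ → EuclideanSpace ℝ (Fin n)) (hΔ : ContDiff ℝ 2 Δ)
    (hode : ∀ t : ℝ, 0 ≤ t →
      deriv (deriv Δ) t + Real.sqrt (2 * lam0) • deriv Δ t
        + Real.sqrt s • Matrix.toEuclideanLin H (deriv Δ t)
        + (1 + Real.sqrt (lam0 * s / 2)) • Matrix.toEuclideanLin H (Δ t) = 0)
    (hinit : deriv Δ 0 = 0) :
    ∀ t : ℝ, 0 ≤ t →
      (1 / 2) * ‖Δ t‖ ^ 2 ≤
        26 * ((1 / 2) * ⟪Δ 0, Matrix.toEuclideanLin H (Δ 0)⟫) / (3 * lam0) *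
          Real.exp (-((1 / 2) * (4 + 3 * (Real.sqrt (2 * lam0 * s) / 4)
              - Real.sqrt (8 + 16 * (Real.sqrt (2 * lam0 * s) / 4)
                  + 9 * (Real.sqrt (2 * lam0 * s) / 4) ^ 2)))
            * Real.sqrt (lam0 / 2) * t) := by
  -- scalar setup
  have hl2 : (0:ℝ) < lam0 / 2 := by linarith
  set μ := Real.sqrt (lam0 / 2) with hμdef
  have hμ : 0 < μ := Real.sqrt_pos.2 hl2
  have hμ2 : μ ^ 2 = lam0 / 2 := Real.sq_sqrt hl2.le
  have hlam0eq : lam0 = 2 * μ ^ 2 := by linarith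
  set σ := Real.sqrt s with hσdef
  have hσ : 0 < σ := Real.sqrt_pos.2 hs
  have h2l : Real.sqrt (2 * lam0) = 2 * μ := by
    rw [show (2:ℝ) * lam0 = (2*μ)^2 by rw [mul_pow, hμ2]; ring]
    exact Real.sqrt_sq (by positivity)
  have hls2 : Real.sqrt (lam0 * s / 2) = μ * σ := by
    rw [show lam0 * s / 2 = (μ*σ)^2 by
      rw [mul_pow, hμ2, hσdef, Real.sq_sqrt hs.le]; ring]
    exact Real.sqrt_sq (by positivity)
  have h2ls : Real.sqrt (2 * lam0 * s) / 4 = μ * σ / 2 := by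
    rw [show (2:ℝ) * lam0 * s = (2*μ*σ)^2 by
      rw [mul_pow, mul_pow, hμ2, hσdef, Real.sq_sqrt hs.le]; ring]
    rw [Real.sqrt_sq (by positivity)]; ring
  set a := μ * σ / 2 with hadef
  have ha : 0 < a := by positivity
  set ρ := (4 + 3*a - Real.sqrt (8 + 16*a + 9*a^2)) / 2 with hρdef
  obtain ⟨hρeq, hρhalf, hρone⟩ := rho_facts a ρ ha hρdef
  have hρpos : 0 < ρ := by linarith
  have ha2 : μ * σ = 2 * a := by rw [hadef]; ring
  -- the operator
  set T : EuclideanSpace ℝ (Fin n) →L[ℝ] EuclideanSpace ℝ (Fin n) :=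
    LinearMap.toContinuousLinearMap (Matrix.toEuclideanLin H) with hTdef
  have hTapp : ∀ y, T y = Matrix.toEuclideanLin H y := fun _ => rfl
  have hherm : H.IsHermitian := by
    rwa [Matrix.IsHermitian, Matrix.conjTranspose_eq_transpose_of_trivial]
  have hTsym : ∀ x y : EuclideanSpace ℝ (Fin n), ⟪T x, y⟫ = ⟪x, T y⟫ := by
    intro x y
    simpa [hTapp] using (Matrix.isHermitian_iff_isSymmetric.1 hherm x y)
  have hlowT : ∀ y : EuclideanSpace ℝ (Fin n), 3*μ^2/2 * ⟪y, y⟫ ≤ ⟪y, T y⟫ := by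
    intro y
    have h1 := hlow y
    have h2 : lam0 * ‖y‖^2 = 2 * μ^2 * ‖y‖^2 := by rw [hlam0eq]
    rw [hTapp, real_inner_self_eq_norm_sq]
    linarith
  -- differentiability
  have hΔ' : ContDiff ℝ (1+1) Δ := by exact_mod_cast hΔ
  have hd1 : Differentiable ℝ Δ := hΔ'.differentiable (by norm_num)
  have hd2 : Differentiable ℝ (deriv Δ) :=
    ((contDiff_succ_iff_deriv.1 hΔ').2.2).differentiable (by norm_num)
  -- Lyapunov function
  set q := 1 + μ*σ + μ*σ*ρ with hqdef
  have hμσ : 0 < μ*σ := mul_pos hμ hσ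
  have hμσρ : 0 < μ*σ*ρ := mul_pos hμσ hρpos
  have hq1 : 1 ≤ q := by rw [hqdef]; linarith
  set V : ℝ → ℝ := fun t =>
      1/2 * ⟪deriv Δ t, deriv Δ t⟫ + ρ*μ * ⟪Δ t, deriv Δ t⟫
      + q/2 * ⟪Δ t, T (Δ t)⟫ + (2*ρ - ρ^2)*μ^2/2 * ⟪Δ t, Δ t⟫ with hVdef
  set V' : ℝ → ℝ := fun t =>
      1/2 * (⟪deriv Δ t, deriv (deriv Δ) t⟫ + ⟪deriv (deriv Δ) t, deriv Δ t⟫)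
      + ρ*μ * (⟪Δ t, deriv (deriv Δ) t⟫ + ⟪deriv Δ t, deriv Δ t⟫)
      + q/2 * (⟪Δ t, T (deriv Δ t)⟫ + ⟪deriv Δ t, T (Δ t)⟫)
      + (2*ρ - ρ^2)*μ^2/2 * (⟪Δ t, deriv Δ t⟫ + ⟪deriv Δ t, Δ t⟫) with hV'def
  have hVderiv : ∀ t, HasDerivAt V (V' t) t := by
    intro t
    have h1 : HasDerivAt Δ (deriv Δ t) t := (hd1 t).hasDerivAt
    have h2 : HasDerivAt (deriv Δ) (deriv (deriv Δ) t) t := (hd2 t).hasDerivAt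
    have h3 : HasDerivAt (fun u => T (Δ u)) (T (deriv Δ t)) t :=
      T.hasFDerivAt.comp_hasDerivAt t h1
    exact (((((HasDerivAt.inner ℝ h2 h2).const_mul (1/2)).add
      ((HasDerivAt.inner ℝ h1 h2).const_mul (ρ*μ))).add
      ((HasDerivAt.inner ℝ h1 h3).const_mul (q/2))).add
      ((HasDerivAt.inner ℝ h1 h1).const_mul ((2*ρ - ρ^2)*μ^2/2)))
  -- ODE rewritten
  have hacc : ∀ t, 0 ≤ t → deriv (deriv Δ) t
      = -((2*μ) • deriv Δ t + σ • T (deriv Δ t) + (1 + μ*σ) • T (Δ t)) := by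
    intro t ht
    have h := hode t ht
    rw [h2l, hls2] at h
    rw [eq_neg_iff_add_eq_zero, ← h]
    simp only [hTapp]
    module
  -- key differential inequality
  have hkey : ∀ t, 0 ≤ t → V' t + ρ*μ * V t ≤ 0 := by
    intro t ht
    have hA := hacc t ht
    have exv : ⟪Δ t, T (deriv Δ t)⟫ = ⟪deriv Δ t, T (Δ t)⟫ := by
      rw [real_inner_comm, hTsym]
    have c2 : ⟪T (deriv Δ t), Δ t⟫ = ⟪deriv Δ t, T (Δ t)⟫ := hTsym _ _
    have c3 : ⟪T (deriv Δ t), deriv Δ t⟫ = ⟪deriv Δ t, T (deriv Δ t)⟫ := hTsym _ _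
    have c4 : ⟪T (Δ t), Δ t⟫ = ⟪Δ t, T (Δ t)⟫ := hTsym _ _
    have c5 : ⟪T (Δ t), deriv Δ t⟫ = ⟪deriv Δ t, T (Δ t)⟫ := by
      rw [hTsym, exv]
    have c6 : ⟪deriv Δ t, Δ t⟫ = ⟪Δ t, deriv Δ t⟫ := real_inner_comm _ _
    simp only [hV'def, hVdef]
    rw [hA]
    simp only [inner_neg_right, inner_neg_left, inner_add_right, inner_add_left,
      real_inner_smul_right, real_inner_smul_left]
    simp only [exv, c2, c3, c4, c5, c6]
    set P := (⟪deriv Δ t, deriv Δ t⟫ : ℝ) with hPdef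
    set R := (⟪Δ t, Δ t⟫ : ℝ) with hRdef
    set S := (⟪deriv Δ t, T (deriv Δ t)⟫ : ℝ) with hSdef
    set W := (⟪Δ t, T (Δ t)⟫ : ℝ) with hWdef
    have hP : (0:ℝ) ≤ P := real_inner_self_nonneg
    have hR : (0:ℝ) ≤ R := real_inner_self_nonneg
    have hS : (0:ℝ) ≤ S := by
      have h1 := hlowT (deriv Δ t)
      have h0 : (0:ℝ) ≤ 3*μ^2/2 * P := by positivity
      linarith
    have hW : 3*μ^2/2 * R ≤ W := hlowT (Δ t)
    have hbr : 0 ≤ 3/2*(1 + μ*σ - μ*σ*ρ) + ρ^2 - 2*ρ := by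
      rw [ha2]
      linarith [hρeq, hρhalf, ha]
    have hc2' : 0 ≤ 1 + μ*σ - μ*σ*ρ := by
      rw [ha2]
      have h := mul_nonneg ha.le (show (0:ℝ) ≤ 1 - ρ by linarith)
      linarith [h]
    have hfA : 0 ≤ ρ*μ/2 * ((1 + μ*σ - μ*σ*ρ) * (W - 3*μ^2/2*R)) := by
      apply mul_nonneg (by positivity)
      exact mul_nonneg hc2' (by linarith)
    have hfB : 0 ≤ ρ*μ/2 * ((3*μ^2/2*(1 + μ*σ - μ*σ*ρ) + (ρ^2 - 2*ρ)*μ^2) * R) := by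
      apply mul_nonneg (by positivity)
      apply mul_nonneg _ hR
      have h1 := mul_nonneg (sq_nonneg μ) hbr
      rw [show 3*μ^2/2*(1 + μ*σ - μ*σ*ρ) + (ρ^2 - 2*ρ)*μ^2
        = μ^2*(3/2*(1 + μ*σ - μ*σ*ρ) + ρ^2 - 2*ρ) from by ring]
      exact h1
    have hfC : 0 ≤ σ * S := mul_nonneg hσ.le hS
    have hfD : 0 ≤ (2 - 3/2*ρ)*μ * P :=
      mul_nonneg (mul_nonneg (by linarith) hμ.le) hP
    have h0 := add_nonneg (add_nonneg (add_nonneg hfA hfB) hfC) hfD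
    rw [hqdef]
    refine le_trans (le_of_eq ?_) (neg_nonpos.mpr h0)
    ring
  -- Gronwall via monotonicity
  set E : ℝ → ℝ := fun t => V t * Real.exp (ρ*μ*t) with hEdef
  have hEderiv : ∀ t, HasDerivAt E ((V' t + ρ*μ * V t) * Real.exp (ρ*μ*t)) t := by
    intro t
    have hlin : HasDerivAt (fun u : ℝ => ρ*μ*u) (ρ*μ) t := by
      simpa using (hasDerivAt_id t).const_mul (ρ*μ)
    have h := (hVderiv t).mul hlin.exp
    exact h.congr_deriv (by ring)
  have hmono : AntitoneOn E (Set.Ici (0:ℝ)) := by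
    apply antitoneOn_of_deriv_nonpos (convex_Ici 0)
    · exact fun t _ => (hEderiv t).continuousAt.continuousWithinAt
    · intro t _
      exact (hEderiv t).differentiableAt.differentiableWithinAt
    · intro t ht
      rw [interior_Ici] at ht
      rw [(hEderiv t).deriv]
      exact mul_nonpos_of_nonpos_of_nonneg (hkey t (le_of_lt ht)) (Real.exp_nonneg _)
  -- conclusion
  intro t ht
  have hEle : V t * Real.exp (ρ*μ*t) ≤ V 0 := by
    have h := hmono Set.self_mem_Ici ht ht
    simpa [hEdef] using h
  -- lower bound on V t
  have hlower : (3*μ^2/4*q + (ρ - ρ^2)*μ^2) * ⟪Δ t, Δ t⟫ ≤ V t := by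
    have hsq0 : (0:ℝ) ≤ ⟪deriv Δ t + (ρ*μ) • Δ t, deriv Δ t + (ρ*μ) • Δ t⟫ :=
      real_inner_self_nonneg
    have hexp : ⟪deriv Δ t + (ρ*μ) • Δ t, deriv Δ t + (ρ*μ) • Δ t⟫
        = ⟪deriv Δ t, deriv Δ t⟫ + 2*(ρ*μ)*⟪Δ t, deriv Δ t⟫ + (ρ*μ)^2*⟪Δ t, Δ t⟫ := by
      simp only [inner_add_left, inner_add_right, real_inner_smul_left, real_inner_smul_right,
        real_inner_comm (Δ t) (deriv Δ t)]
      ring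
    have hW : 3*μ^2/2 * ⟪Δ t, Δ t⟫ ≤ ⟪Δ t, T (Δ t)⟫ := hlowT (Δ t)
    have hqW : 0 ≤ q/2 * (⟪Δ t, T (Δ t)⟫ - 3*μ^2/2 * ⟪Δ t, Δ t⟫) :=
      mul_nonneg (by linarith) (by linarith)
    have h0 : 0 ≤ 1/2 * ⟪deriv Δ t + (ρ*μ) • Δ t, deriv Δ t + (ρ*μ) • Δ t⟫
        + q/2 * (⟪Δ t, T (Δ t)⟫ - 3*μ^2/2 * ⟪Δ t, Δ t⟫) :=
      add_nonneg (by linarith [hsq0]) hqW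
    simp only [hVdef]
    calc (3*μ^2/4*q + (ρ - ρ^2)*μ^2) * ⟪Δ t, Δ t⟫
        ≤ (3*μ^2/4*q + (ρ - ρ^2)*μ^2) * ⟪Δ t, Δ t⟫
          + (1/2 * ⟪deriv Δ t + (ρ*μ) • Δ t, deriv Δ t + (ρ*μ) • Δ t⟫
            + q/2 * (⟪Δ t, T (Δ t)⟫ - 3*μ^2/2 * ⟪Δ t, Δ t⟫)) := le_add_of_nonneg_right h0
      _ = 1/2 * ⟪deriv Δ t, deriv Δ t⟫ + ρ*μ * ⟪Δ t, deriv Δ t⟫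
          + q/2 * ⟪Δ t, T (Δ t)⟫ + (2*ρ - ρ^2)*μ^2/2 * ⟪Δ t, Δ t⟫ := by
            rw [hexp]; ring
  -- upper bound on V 0
  have hupper : V 0 ≤ (q/2 + (2*ρ - ρ^2)/3) * ⟪Δ 0, T (Δ 0)⟫ := by
    have hW0 : 3*μ^2/2 * ⟪Δ 0, Δ 0⟫ ≤ ⟪Δ 0, T (Δ 0)⟫ := hlowT (Δ 0)
    have hc : (0:ℝ) ≤ 2*ρ - ρ^2 := by
      rw [show 2*ρ - ρ^2 = ρ*(2-ρ) from by ring]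
      exact mul_nonneg hρpos.le (by linarith)
    have hint : (2*ρ - ρ^2)*μ^2/2 * ⟪Δ 0, Δ 0⟫ ≤ (2*ρ - ρ^2)/3 * ⟪Δ 0, T (Δ 0)⟫ := by
      calc (2*ρ - ρ^2)*μ^2/2 * ⟪Δ 0, Δ 0⟫
          = (2*ρ - ρ^2)/3 * (3*μ^2/2 * ⟪Δ 0, Δ 0⟫) := by ring
        _ ≤ (2*ρ - ρ^2)/3 * ⟪Δ 0, T (Δ 0)⟫ :=
            mul_le_mul_of_nonneg_left hW0 (by linarith)
    simp only [hVdef, hinit, inner_zero_left, inner_zero_right]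
    calc 1/2 * (0:ℝ) + ρ*μ * 0 + q/2 * ⟪Δ 0, T (Δ 0)⟫ + (2*ρ - ρ^2)*μ^2/2 * ⟪Δ 0, Δ 0⟫
        = q/2 * ⟪Δ 0, T (Δ 0)⟫ + (2*ρ - ρ^2)*μ^2/2 * ⟪Δ 0, Δ 0⟫ := by ring
      _ ≤ q/2 * ⟪Δ 0, T (Δ 0)⟫ + (2*ρ - ρ^2)/3 * ⟪Δ 0, T (Δ 0)⟫ := by linarith [hint]
      _ = (q/2 + (2*ρ - ρ^2)/3) * ⟪Δ 0, T (Δ 0)⟫ := by ring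
  have hW0pos : (0:ℝ) ≤ ⟪Δ 0, T (Δ 0)⟫ := by
    have h1 := hlowT (Δ 0)
    have h0 : (0:ℝ) ≤ 3*μ^2/2 * ⟪Δ 0, Δ 0⟫ :=
      mul_nonneg (by positivity) real_inner_self_nonneg
    linarith
  -- assemble
  have hexppos : (0:ℝ) < Real.exp (-(ρ*μ*t)) := Real.exp_pos _
  have hVt : V t ≤ (q/2 + (2*ρ - ρ^2)/3) * ⟪Δ 0, T (Δ 0)⟫ * Real.exp (-(ρ*μ*t)) := by
    have h1 : V t ≤ V 0 * Real.exp (-(ρ*μ*t)) := by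
      have h2 : V t * Real.exp (ρ*μ*t) * Real.exp (-(ρ*μ*t)) ≤ V 0 * Real.exp (-(ρ*μ*t)) :=
        mul_le_mul_of_nonneg_right hEle hexppos.le
      rwa [mul_assoc, ← Real.exp_add, add_neg_cancel, Real.exp_zero, mul_one] at h2
    exact le_trans h1 (mul_le_mul_of_nonneg_right hupper hexppos.le)
  have hρρ : 0 ≤ (ρ - ρ^2)*μ^2 := by
    rw [show ρ - ρ^2 = ρ*(1-ρ) from by ring]
    exact mul_nonneg (mul_nonneg hρpos.le (by linarith)) (sq_nonneg μ)
  have hclpos : 0 < 3*μ^2/4*q + (ρ - ρ^2)*μ^2 := by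
    have e1 : (0:ℝ) < 3*μ^2/4 := by positivity
    have e2 : 3*μ^2/4 ≤ 3*μ^2/4*q := by
      calc 3*μ^2/4 = 3*μ^2/4*1 := by ring
        _ ≤ 3*μ^2/4*q := mul_le_mul_of_nonneg_left hq1 (by positivity)
    linarith
  have hcoeffμ : 6*μ^2 * (q/2 + (2*ρ - ρ^2)/3) ≤ 26 * (3*μ^2/4*q + (ρ - ρ^2)*μ^2) := by
    have hq1' := hq1
    have hρpos' := hρpos
    have hρone' := hρone
    clear_value q ρ
    have a1 : 0 ≤ μ^2 * (q - 1) := mul_nonneg (sq_nonneg μ) (by linarith)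
    have a2 : 0 ≤ μ^2 * (ρ * (1 - ρ)) :=
      mul_nonneg (sq_nonneg μ) (mul_nonneg hρpos.le (by linarith))
    have a3 : 0 ≤ μ^2 * (1 - ρ) := mul_nonneg (sq_nonneg μ) (by linarith)
    have a4 : (0:ℝ) ≤ μ^2 := sq_nonneg μ
    linarith [a1, a2, a3, a4]
  -- final inequality
  have hRt : (0:ℝ) ≤ ⟪Δ t, Δ t⟫ := real_inner_self_nonneg
  have hprod : 0 ≤ ⟪Δ 0, T (Δ 0)⟫ * Real.exp (-(ρ*μ*t)) :=
    mul_nonneg hW0pos hexppos.le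
  have hchain : (3*μ^2/4*q + (ρ - ρ^2)*μ^2) * ⟪Δ t, Δ t⟫
      ≤ (q/2 + (2*ρ - ρ^2)/3) * ⟪Δ 0, T (Δ 0)⟫ * Real.exp (-(ρ*μ*t)) :=
    le_trans hlower hVt
  have h3 : (3*μ^2/4*q + (ρ - ρ^2)*μ^2) * (6*μ^2*⟪Δ t, Δ t⟫)
      ≤ (3*μ^2/4*q + (ρ - ρ^2)*μ^2) * (26*(⟪Δ 0, T (Δ 0)⟫ * Real.exp (-(ρ*μ*t)))) := by
    calc (3*μ^2/4*q + (ρ - ρ^2)*μ^2) * (6*μ^2*⟪Δ t, Δ t⟫)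
        = 6*μ^2 * ((3*μ^2/4*q + (ρ - ρ^2)*μ^2) * ⟪Δ t, Δ t⟫) := by ring
      _ ≤ 6*μ^2 * ((q/2 + (2*ρ - ρ^2)/3) * ⟪Δ 0, T (Δ 0)⟫ * Real.exp (-(ρ*μ*t))) :=
          mul_le_mul_of_nonneg_left hchain (by positivity)
      _ = (6*μ^2 * (q/2 + (2*ρ - ρ^2)/3)) * (⟪Δ 0, T (Δ 0)⟫ * Real.exp (-(ρ*μ*t))) := by ring
      _ ≤ (26 * (3*μ^2/4*q + (ρ - ρ^2)*μ^2)) * (⟪Δ 0, T (Δ 0)⟫ * Real.exp (-(ρ*μ*t))) :=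
          mul_le_mul_of_nonneg_right hcoeffμ hprod
      _ = (3*μ^2/4*q + (ρ - ρ^2)*μ^2) * (26*(⟪Δ 0, T (Δ 0)⟫ * Real.exp (-(ρ*μ*t)))) := by ring
  have h4 : 6*μ^2*⟪Δ t, Δ t⟫ ≤ 26*(⟪Δ 0, T (Δ 0)⟫ * Real.exp (-(ρ*μ*t))) :=
    le_of_mul_le_mul_left h3 hclpos
  have hgoal : (1/2) * ‖Δ t‖^2 ≤
      26 * ((1/2) * ⟪Δ 0, T (Δ 0)⟫) / (3*lam0) * Real.exp (-(ρ*μ*t)) := by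
    rw [show ‖Δ t‖^2 = ⟪Δ t, Δ t⟫ from (real_inner_self_eq_norm_sq _).symm]
    have hfin : 26 * ((1/2) * ⟪Δ 0, T (Δ 0)⟫) / (3*lam0) * Real.exp (-(ρ*μ*t))
        = 13 * (⟪Δ 0, T (Δ 0)⟫ * Real.exp (-(ρ*μ*t))) / (3*lam0) := by ring
    rw [hfin, le_div_iff₀ (show (0:ℝ) < 3*lam0 by linarith), hlam0eq]
    linarith [h4]
  -- rewrite the goal to match
  rw [show Matrix.toEuclideanLin H (Δ 0) = T (Δ 0) from (hTapp _).symm]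
  rw [h2ls]
  have hexpeq : (-((1/2) * (4 + 3*a - Real.sqrt (8 + 16*a + 9*a^2))) * μ * t)
      = -(ρ*μ*t) := by rw [hρdef]; ring
  rw [hexpeq]
  exact hgoal
end

section
/- Let n be a positive integer, H a symmetric n×n real matrix, and λ0, s positive reals. Let Δ : ℝ → ℝⁿ be twice continuously differentiable and satisfy Δ''(t) + √(2λ0) Δ'(t) + √s H Δ'(t) + (1 + √(λ0 s/2)) H Δ(t) = 0 for all t. Define V(t) := (1 + √(λ0 s/2)) L̂(t) + (1/4)‖Δ'(t)‖² + (1/4)‖Δ'(t) + √(2λ0) Δ(t) + √s H Δ(t)‖², where L̂(t) := (1/2) Δ(t)ᵀ H Δ(t). Then for all t, V is differentiable with V'(t) = −(√(2λ0)/2)‖Δ'(t)‖² − (√s/2) Δ'(t)ᵀ H Δ'(t) − (1 + √(λ0 s/2)) √(2λ0) L̂(t) − (√s/2)(1 + √(λ0 s/2)) ‖H Δ(t)‖². -/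
open scoped RealInnerProductSpace

theorem nag_lyapunov_derivative
    (n : ℕ) (hn : 0 < n) (H : Matrix (Fin n) (Fin n) ℝ) (hHsymm : H.IsSymm)
    (lam0 s : ℝ) (hlam0 : 0 < lam0) (hs : 0 < s)
    (Δ : ℝ → EuclideanSpace ℝ (Fin n)) (hΔ : ContDiff ℝ 2 Δ)
    (hode : ∀ t : ℝ,
      deriv (deriv Δ) t + Real.sqrt (2 * lam0) • deriv Δ t
        + Real.sqrt s • Matrix.toEuclideanLin H (deriv Δ t)
        + (1 + Real.sqrt (lam0 * s / 2)) • Matrix.toEuclideanLin H (Δ t) = 0) :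
    ∀ t : ℝ,
      HasDerivAt (fun τ : ℝ =>
        (1 + Real.sqrt (lam0 * s / 2)) * ((1 / 2) * ⟪Δ τ, Matrix.toEuclideanLin H (Δ τ)⟫)
          + (1 / 4) * ‖deriv Δ τ‖ ^ 2
          + (1 / 4) * ‖deriv Δ τ + Real.sqrt (2 * lam0) • Δ τ
              + Real.sqrt s • Matrix.toEuclideanLin H (Δ τ)‖ ^ 2)
        (-(Real.sqrt (2 * lam0) / 2) * ‖deriv Δ t‖ ^ 2
          - (Real.sqrt s / 2) * ⟪deriv Δ t, Matrix.toEuclideanLin H (deriv Δ t)⟫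
          - (1 + Real.sqrt (lam0 * s / 2)) * Real.sqrt (2 * lam0) *
              ((1 / 2) * ⟪Δ t, Matrix.toEuclideanLin H (Δ t)⟫)
          - (Real.sqrt s / 2) * (1 + Real.sqrt (lam0 * s / 2)) *
              ‖Matrix.toEuclideanLin H (Δ t)‖ ^ 2)
        t := by
  intro t
  set a := Real.sqrt (2 * lam0) with ha
  set b := Real.sqrt s with hb
  set c := 1 + Real.sqrt (lam0 * s / 2) with hc
  set A : EuclideanSpace ℝ (Fin n) →L[ℝ] EuclideanSpace ℝ (Fin n) :=
    LinearMap.toContinuousLinearMap (Matrix.toEuclideanLin H) with hA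
  have hAapp : ∀ x, A x = Matrix.toEuclideanLin H x := fun _ => rfl
  have hsymLM : (Matrix.toEuclideanLin H).IsSymmetric := by
    rw [← Matrix.isHermitian_iff_isSymmetric]
    simpa [Matrix.IsHermitian] using hHsymm.eq
  have hsym : ∀ x y : EuclideanSpace ℝ (Fin n), ⟪A x, y⟫ = ⟪x, A y⟫ := by
    intro x y; rw [hAapp, hAapp]; exact hsymLM x y
  -- differentiability
  have h2 : ContDiff ℝ ((1 : ℕ) + 1) Δ := by exact_mod_cast hΔ
  rw [contDiff_succ_iff_deriv] at h2
  have hd1 : Differentiable ℝ Δ := h2.1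
  have hd2 : Differentiable ℝ (deriv Δ) := h2.2.2.differentiable (by simp)
  have hw : ∀ τ, HasDerivAt Δ (deriv Δ τ) τ := fun τ => (hd1 τ).hasDerivAt
  have hw' : ∀ τ, HasDerivAt (deriv Δ) (deriv (deriv Δ) τ) τ :=
    fun τ => (hd2 τ).hasDerivAt
  have hAu : ∀ τ, HasDerivAt (fun σ => A (Δ σ)) (A (deriv Δ τ)) τ :=
    fun τ => A.hasFDerivAt.comp_hasDerivAt τ (hw τ)
  -- derivative of inner products
  have h1 : HasDerivAt (fun τ => ⟪Δ τ, A (Δ τ)⟫)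
      (⟪Δ t, A (deriv Δ t)⟫ + ⟪deriv Δ t, A (Δ t)⟫) t := (hw t).inner ℝ (hAu t)
  have h2' : HasDerivAt (fun τ => ⟪deriv Δ τ, deriv Δ τ⟫)
      (⟪deriv Δ t, deriv (deriv Δ) t⟫ + ⟪deriv (deriv Δ) t, deriv Δ t⟫) t :=
    (hw' t).inner ℝ (hw' t)
  have hz : ∀ τ, HasDerivAt (fun σ => deriv Δ σ + a • Δ σ + b • A (Δ σ))
      (deriv (deriv Δ) τ + a • deriv Δ τ + b • A (deriv Δ τ)) τ :=
    fun τ => ((hw' τ).add ((hw τ).const_smul a)).add ((hAu τ).const_smul b)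
  have h3 : HasDerivAt (fun τ => ⟪deriv Δ τ + a • Δ τ + b • A (Δ τ),
        deriv Δ τ + a • Δ τ + b • A (Δ τ)⟫)
      (⟪deriv Δ t + a • Δ t + b • A (Δ t),
          deriv (deriv Δ) t + a • deriv Δ t + b • A (deriv Δ t)⟫
        + ⟪deriv (deriv Δ) t + a • deriv Δ t + b • A (deriv Δ t),
            deriv Δ t + a • Δ t + b • A (Δ t)⟫) t := (hz t).inner ℝ (hz t)
  have hV : HasDerivAt (fun τ => c * ((1 / 2) * ⟪Δ τ, A (Δ τ)⟫)
      + (1 / 4) * ⟪deriv Δ τ, deriv Δ τ⟫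
      + (1 / 4) * ⟪deriv Δ τ + a • Δ τ + b • A (Δ τ), deriv Δ τ + a • Δ τ + b • A (Δ τ)⟫)
      (c * ((1 / 2) * (⟪Δ t, A (deriv Δ t)⟫ + ⟪deriv Δ t, A (Δ t)⟫))
        + (1 / 4) * (⟪deriv Δ t, deriv (deriv Δ) t⟫ + ⟪deriv (deriv Δ) t, deriv Δ t⟫)
        + (1 / 4) * (⟪deriv Δ t + a • Δ t + b • A (Δ t),
              deriv (deriv Δ) t + a • deriv Δ t + b • A (deriv Δ t)⟫
            + ⟪deriv (deriv Δ) t + a • deriv Δ t + b • A (deriv Δ t),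
                deriv Δ t + a • Δ t + b • A (Δ t)⟫)) t := by
    exact (((h1.const_mul (1/2 : ℝ)).const_mul c).add (h2'.const_mul (1/4 : ℝ))).add
      (h3.const_mul (1/4 : ℝ))
  -- the functions are equal
  have hfun : (fun τ => c * ((1 / 2) * ⟪Δ τ, A (Δ τ)⟫)
      + (1 / 4) * ⟪deriv Δ τ, deriv Δ τ⟫
      + (1 / 4) * ⟪deriv Δ τ + a • Δ τ + b • A (Δ τ), deriv Δ τ + a • Δ τ + b • A (Δ τ)⟫)
      = (fun τ : ℝ =>
        c * ((1 / 2) * ⟪Δ τ, Matrix.toEuclideanLin H (Δ τ)⟫)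
          + (1 / 4) * ‖deriv Δ τ‖ ^ 2
          + (1 / 4) * ‖deriv Δ τ + a • Δ τ + b • Matrix.toEuclideanLin H (Δ τ)‖ ^ 2) := by
    funext τ
    rw [real_inner_self_eq_norm_sq, real_inner_self_eq_norm_sq, hAapp]
  rw [hfun] at hV
  -- rewrite the derivative value using the ODE
  set u := Δ t
  set w := deriv Δ t
  have hode' : deriv (deriv Δ) t = -(a • w + b • A w + c • A u) := by
    have := hode t
    rw [← hAapp, ← hAapp] at this
    have : deriv (deriv Δ) t + (a • w + b • A w + c • A u) = 0 := by
      rw [← this]; abel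
    linear_combination (norm := abel) this
  have hval : (c * ((1 / 2) * (⟪u, A w⟫ + ⟪w, A u⟫))
        + (1 / 4) * (⟪w, deriv (deriv Δ) t⟫ + ⟪deriv (deriv Δ) t, w⟫)
        + (1 / 4) * (⟪w + a • u + b • A u,
              deriv (deriv Δ) t + a • w + b • A w⟫
            + ⟪deriv (deriv Δ) t + a • w + b • A w, w + a • u + b • A u⟫))
      = (-(a / 2) * ‖w‖ ^ 2 - (b / 2) * ⟪w, A w⟫
          - c * a * ((1 / 2) * ⟪u, A u⟫) - (b / 2) * c * ‖A u‖ ^ 2) := by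
    have e1 : deriv (deriv Δ) t + a • w + b • A w = -(c • A u) := by
      rw [hode']; abel
    rw [e1, hode']
    have s1 : ⟪A u, w⟫ = ⟪u, A w⟫ := hsym u w
    have s3 : ⟪A w, w⟫ = ⟪w, A w⟫ := hsym w w
    have s4 : ⟪A u, u⟫ = ⟪u, A u⟫ := hsym u u
    have c1 : ⟪w, A u⟫ = ⟪A u, w⟫ := real_inner_comm _ _
    have c2 : ⟪u, A w⟫ = ⟪A w, u⟫ := real_inner_comm _ _
    rw [← real_inner_self_eq_norm_sq, ← real_inner_self_eq_norm_sq]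
    simp only [inner_add_left, inner_add_right, inner_neg_left, inner_neg_right,
      inner_smul_left, inner_smul_right, RCLike.star_def, starRingEnd_apply,
      star_trivial]
    have c3 : ⟪w, A w⟫ = ⟪A w, w⟫ := real_inner_comm _ _
    have c4 : ⟪u, A u⟫ = ⟪A u, u⟫ := real_inner_comm _ _
    have c5 : ⟪w, u⟫ = ⟪u, w⟫ := real_inner_comm _ _
    linear_combination (-(c/2)) * s1 - (b/4) * s3 - (c*a/4) * s4
  refine hV.congr_deriv ?_
  rw [hval]
  simp only [hAapp]
end

section
/- Let n be a positive integer, H a symmetric n×n real matrix, and λ0, λm, s positive reals with 0 < s ≤ 2/λm, such that (λ0/2)‖v‖² ≤ vᵀHv ≤ λm‖v‖² for all v ∈ ℝⁿ. Let Δ : ℝ → ℝⁿ be twice continuously differentiable and satisfy Δ''(t) + √(2λ0) Δ'(t) + √s H Δ'(t) + (1 + √(λ0 s/2)) H Δ(t) = 0 for all t ≥ 0. Define V(t) := (1 + √(λ0 s/2)) L̂(t) + (1/4)‖Δ'(t)‖² + (1/4)‖Δ'(t) + √(2λ0) Δ(t) + √s H Δ(t)‖², where L̂(t) := (1/2) Δ(t)ᵀ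 H Δ(t), and set α := √(2 λ0 s)/4 and ρ*_NAG(α) := (1/2)(4 + 3α − √(8 + 16α + 9α²)). Then for all t ≥ 0, V(t) ≤ exp(−ρ*_NAG(α) √(λ0/2) t) · V(0). -/
lemma key_poly (a u ρ : ℝ) (ha : 0 ≤ a) (hu : 0 ≤ u) (hρ : ρ ≤ 2/3)
    (hq : ρ^2 = (4+3*a)*ρ - 2 - 2*a) :
    (ρ/2) * (1+a*(1+u))^2 * (2*(1+a*(1+u)) - ρ/2)
      ≤ (1+2*a) * (1+u) * ((1+a*(1+u)) - ρ/2)^2 := by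
  have h3 : ρ^2 - (4+3*a)*ρ + 2 + 2*a = 0 := by linarith
  have h4 : ((1+2*a)*(1+u)+(1+a*(1+u))^2)/4 * (ρ^2 - (4+3*a)*ρ + 2 + 2*a) = 0 := by
    rw [h3]; ring
  have ht : 0 ≤ 2/3 - ρ := by linarith
  have hA : (0:ℝ) ≤ u/2 + (2/3)*a + 2*a*u + (4/3)*a*u^2 + (11/6)*a^2 + (14/3)*a^2*u
      + (23/6)*a^2*u^2 + a^2*u^3 + (4/3)*a^3 + 4*a^3*u + 4*a^3*u^2 + (4/3)*a^3*u^3 := by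
    positivity
  have hB : (0:ℝ) ≤ (1/2)*a + (9/4)*a*u + a*u^2 + a^2 + 5*a^2*u + 4*a^2*u^2
      + (1/4)*a^3 + (3/2)*a^3*u + (9/4)*a^3*u^2 + a^3*u^3 := by positivity
  have hBt := mul_nonneg ht hB
  nlinarith [h4, hA, hBt]

lemma quad_nonneg (A B C w x : ℝ) (hA : 0 < A) (hD : B^2 ≤ 4*A*C) :
    0 ≤ A*w^2 + B*(w*x) + C*x^2 := by
  nlinarith [sq_nonneg (2*A*w + B*x), mul_nonneg (sub_nonneg.mpr hD) (sq_nonneg x)]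

lemma quad_step (k m D w x : ℝ) (hmk : 0 < m - k)
    (hstar : k*m^2*(2*m-k) ≤ 4*D*(m-k)^2) :
    k*(D/2*x^2 + w^2/4 + (w+m*x)^2/4) ≤ m/2*w^2 + D*m/2*x^2 := by
  have hdisc : (-(k*m/2))^2 ≤ 4*((m-k)/2)*(D*(m-k)/2 - k*m^2/4) := by nlinarith
  have hq2 := quad_nonneg ((m-k)/2) (-(k*m/2)) (D*(m-k)/2 - k*m^2/4) w x
    (by linarith) hdisc
  nlinarith [hq2]

lemma scalar_ineq (c r μ ρ : ℝ) (hc : 0 < c) (hr : 0 ≤ r) (hμ : c^2/4 ≤ μ)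
    (hρ0 : 0 ≤ ρ) (hρ : ρ ≤ 2/3) (hq : ρ^2 = (4+3*(c*r/4))*ρ - 2 - 2*(c*r/4))
    (w x : ℝ) :
    (ρ*c/2)*((1+c*r/2)*μ/2*x^2 + w^2/4 + (w+(c+r*μ)*x)^2/4)
      ≤ (c+r*μ)/2*w^2 + (1+c*r/2)*μ*(c+r*μ)/2*x^2 := by
  have ha : (0:ℝ) ≤ c*r/4 := by positivity
  have hu : (0:ℝ) ≤ 4*μ/c^2 - 1 := by
    rw [sub_nonneg, le_div_iff₀ (by positivity)]; linarith
  set a : ℝ := c*r/4 with hadef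
  set u : ℝ := 4*μ/c^2 - 1 with hudef
  have hμθ : μ = c^2*(1+u)/4 := by
    rw [hudef]; field_simp; ring
  have hkey := key_poly a u ρ ha hu hρ hq
  have hm : c + r*μ = c*(1+a*(1+u)) := by rw [hμθ, hadef]; ring
  have hβ : (1:ℝ)+c*r/2 = 1+2*a := by rw [hadef]; ring
  have hstar : (ρ*c/2)*(c+r*μ)^2*(2*(c+r*μ) - ρ*c/2)
      ≤ 4*((1+2*a)*μ)*((c+r*μ) - ρ*c/2)^2 := by
    rw [hm, hμθ]
    have hc4 : (0:ℝ) < c^4 := by positivity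
    calc (ρ*c/2)*(c*(1+a*(1+u)))^2*(2*(c*(1+a*(1+u))) - ρ*c/2)
        = c^4 * ((ρ/2) * (1+a*(1+u))^2 * (2*(1+a*(1+u)) - ρ/2)) := by ring
      _ ≤ c^4 * ((1+2*a) * (1+u) * ((1+a*(1+u)) - ρ/2)^2) :=
          mul_le_mul_of_nonneg_left hkey (le_of_lt hc4)
      _ = 4*((1+2*a)*(c^2*(1+u)/4))*((c*(1+a*(1+u))) - ρ*c/2)^2 := by ring
  have hmk : 0 < (c+r*μ) - ρ*c/2 := by
    have h2 : 0 ≤ r*μ := mul_nonneg hr (by nlinarith)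
    nlinarith
  have := quad_step (ρ*c/2) (c+r*μ) ((1+2*a)*μ) w x hmk hstar
  rw [hβ]
  calc (ρ*c/2)*((1+2*a)*μ/2*x^2 + w^2/4 + (w+(c+r*μ)*x)^2/4)
      ≤ (c+r*μ)/2*w^2 + (1+2*a)*μ*(c+r*μ)/2*x^2 := by
        refine le_trans (le_of_eq ?_) (le_trans this (le_of_eq ?_)) <;> ring
    _ = (c+r*μ)/2*w^2 + (1+2*a)*μ*(c+r*μ)/2*x^2 := rfl

open scoped RealInnerProductSpace

set_option maxHeartbeats 2000000 in
theorem nag_lyapunov_decay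
    (n : ℕ) (hn : 0 < n) (H : Matrix (Fin n) (Fin n) ℝ) (hHsymm : H.IsSymm)
    (lam0 lamm s : ℝ) (hlam0 : 0 < lam0) (hlamm : 0 < lamm)
    (hs : 0 < s) (hs2 : s ≤ 2 / lamm)
    (hlow : ∀ v : EuclideanSpace ℝ (Fin n),
      lam0 / 2 * ‖v‖ ^ 2 ≤ ⟪v, Matrix.toEuclideanLin H v⟫)
    (hup : ∀ v : EuclideanSpace ℝ (Fin n),
      ⟪v, Matrix.toEuclideanLin H v⟫ ≤ lamm * ‖v‖ ^ 2)
    (Δ : ℝ → EuclideanSpace ℝ (Fin n)) (hΔ : ContDiff ℝ 2 Δ)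
    (hode : ∀ t : ℝ, 0 ≤ t →
      deriv (deriv Δ) t + Real.sqrt (2 * lam0) • deriv Δ t
        + Real.sqrt s • Matrix.toEuclideanLin H (deriv Δ t)
        + (1 + Real.sqrt (lam0 * s / 2)) • Matrix.toEuclideanLin H (Δ t) = 0)
    (V : ℝ → ℝ)
    (hV : ∀ t : ℝ, V t =
      (1 + Real.sqrt (lam0 * s / 2)) * ((1 / 2) * ⟪Δ t, Matrix.toEuclideanLin H (Δ t)⟫)
        + (1 / 4) * ‖deriv Δ t‖ ^ 2
        + (1 / 4) * ‖deriv Δ t + Real.sqrt (2 * lam0) • Δ t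
            + Real.sqrt s • Matrix.toEuclideanLin H (Δ t)‖ ^ 2) :
    ∀ t : ℝ, 0 ≤ t →
      V t ≤ Real.exp (-((1 / 2) * (4 + 3 * (Real.sqrt (2 * lam0 * s) / 4)
            - Real.sqrt (8 + 16 * (Real.sqrt (2 * lam0 * s) / 4)
                + 9 * (Real.sqrt (2 * lam0 * s) / 4) ^ 2)))
          * Real.sqrt (lam0 / 2) * t) * V 0 := by
  have hlam0' : (0:ℝ) < 2*lam0 := by linarith
  set TM := Matrix.toEuclideanLin H with hTMdef
  set c := Real.sqrt (2 * lam0) with hcdef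
  set r := Real.sqrt s with hrdef
  set β := Real.sqrt (lam0 * s / 2) with hβdef
  set a := Real.sqrt (2 * lam0 * s) / 4 with hadef
  set q := Real.sqrt (8 + 16 * a + 9 * a ^ 2) with hqdef
  set ρ := (1 / 2) * (4 + 3 * a - q) with hρdef
  have hc0 : 0 < c := Real.sqrt_pos.mpr hlam0'
  have hr0 : 0 < r := Real.sqrt_pos.mpr hs
  have hc2 : c ^ 2 = 2 * lam0 := Real.sq_sqrt hlam0'.le
  have hr2 : r ^ 2 = s := Real.sq_sqrt hs.le
  have ha0 : 0 ≤ a := by rw [hadef]; positivity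
  have h4 : Real.sqrt 4 = 2 := by
    rw [show (4:ℝ) = 2 ^ 2 by norm_num, Real.sqrt_sq (by norm_num : (0:ℝ) ≤ 2)]
  have hcr : c * r = 4 * a := by
    rw [hcdef, hrdef, hadef, ← Real.sqrt_mul (by linarith) s]; ring
  have hβa : β = 2 * a := by
    rw [hβdef, hadef, show (2:ℝ) * lam0 * s = 4 * (lam0 * s / 2) by ring,
      Real.sqrt_mul (by norm_num : (0:ℝ) ≤ 4), h4]
    ring
  have hsqhalf : Real.sqrt (lam0 / 2) = c / 2 := by
    rw [hcdef, show (2:ℝ) * lam0 = 4 * (lam0 / 2) by ring,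
      Real.sqrt_mul (by norm_num : (0:ℝ) ≤ 4), h4]
    ring
  have hq2 : q ^ 2 = 8 + 16 * a + 9 * a ^ 2 := Real.sq_sqrt (by positivity)
  have hq0 : 0 ≤ q := by rw [hqdef]; exact Real.sqrt_nonneg _
  have hρ0 : 0 ≤ ρ := by
    have h1 : q ≤ 4 + 3 * a := by
      have h2 := Real.sqrt_le_sqrt (show 8 + 16 * a + 9 * a ^ 2 ≤ (4 + 3 * a) ^ 2 by nlinarith)
      rwa [Real.sqrt_sq (by positivity)] at h2
    rw [hρdef]; linarith
  have hρ23 : ρ ≤ 2 / 3 := by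
    have h1 : (8/3 : ℝ) + 3 * a ≤ q := by
      have h2 := Real.sqrt_le_sqrt (show ((8:ℝ)/3 + 3 * a) ^ 2 ≤ 8 + 16 * a + 9 * a ^ 2 by nlinarith)
      rwa [Real.sqrt_sq (by positivity)] at h2
    rw [hρdef]; linarith
  have hqq : ρ ^ 2 = (4 + 3 * a) * ρ - 2 - 2 * a := by
    rw [hρdef]; linear_combination (1/4) * hq2
  -- spectral theory
  have hHerm : H.IsHermitian := by
    rw [Matrix.IsHermitian, Matrix.conjTranspose_eq_transpose_of_trivial]; exact hHsymm
  have hTsym : TM.IsSymmetric := by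
    rw [hTMdef]; exact Matrix.isHermitian_iff_isSymmetric.mp hHerm
  set b := hTsym.eigenvectorBasis finrank_euclideanSpace_fin with hbdef
  set μ := hTsym.eigenvalues finrank_euclideanSpace_fin with hμdef
  have happly : ∀ i, TM (b i) = μ i • b i := fun i => by
    exact_mod_cast hTsym.apply_eigenvectorBasis finrank_euclideanSpace_fin i
  have hbnorm : ∀ i, ‖b i‖ = 1 := fun i => b.orthonormal.1 i
  have hco : ∀ (v : EuclideanSpace ℝ (Fin n)) (i : Fin n),
      ⟪TM v, b i⟫ = μ i * ⟪v, b i⟫ := fun v i => by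
    rw [hTsym v (b i), happly i, real_inner_smul_right]
  have hμlow : ∀ i, lam0 / 2 ≤ μ i := fun i => by
    have h1 := hlow (b i)
    have h2 : ⟪b i, TM (b i)⟫ = μ i := by
      rw [happly i, real_inner_smul_right, real_inner_self_eq_norm_sq, hbnorm i]
      norm_num
    rw [hbnorm i] at h1
    rw [h2] at h1
    linarith [h1]
  have hPar : ∀ u v : EuclideanSpace ℝ (Fin n),
      ⟪u, v⟫ = ∑ i, ⟪u, b i⟫ * ⟪v, b i⟫ := fun u v => by
    rw [← b.sum_inner_mul_inner u v]
    exact Finset.sum_congr rfl fun i _ => by rw [real_inner_comm (b i) v]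
  -- calculus facts
  have hΔ' : ContDiff ℝ (1 + 1) Δ := by
    rwa [show ((1:WithTop ℕ∞) + 1) = 2 by norm_num]
  have hdiff1 : Differentiable ℝ Δ := hΔ.differentiable (by norm_num)
  have hC1 : ContDiff ℝ 1 (deriv Δ) := (contDiff_succ_iff_deriv.mp hΔ').2.2
  have hdiff2 : Differentiable ℝ (deriv Δ) := hC1.differentiable (by norm_num)
  have hxd : ∀ τ, HasDerivAt Δ (deriv Δ τ) τ := fun τ => (hdiff1 τ).hasDerivAt
  have hwd : ∀ τ, HasDerivAt (deriv Δ) (deriv (deriv Δ) τ) τ := fun τ => (hdiff2 τ).hasDerivAt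
  have hTd : ∀ (f : ℝ → EuclideanSpace ℝ (Fin n)) (f' : EuclideanSpace ℝ (Fin n)) (τ : ℝ),
      HasDerivAt f f' τ → HasDerivAt (fun x => TM (f x)) (TM f') τ := by
    intro f f' τ hf
    have h := (LinearMap.toContinuousLinearMap TM).hasFDerivAt.comp_hasDerivAt τ hf
    exact h
  -- V as inner products
  have hVfun : V = fun τ => (1+β)*((1/2)*⟪Δ τ, TM (Δ τ)⟫)
      + (1/4)*⟪deriv Δ τ, deriv Δ τ⟫
      + (1/4)*⟪deriv Δ τ + c • Δ τ + r • TM (Δ τ), deriv Δ τ + c • Δ τ + r • TM (Δ τ)⟫ := by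
    funext τ
    rw [hV τ]
    simp only [← real_inner_self_eq_norm_sq]
  have hVd : ∀ τ : ℝ, HasDerivAt V
      ((1+β)*((1/2)*(⟪Δ τ, TM (deriv Δ τ)⟫ + ⟪deriv Δ τ, TM (Δ τ)⟫))
        + (1/4)*(⟪deriv Δ τ, deriv (deriv Δ) τ⟫ + ⟪deriv (deriv Δ) τ, deriv Δ τ⟫)
        + (1/4)*(⟪deriv Δ τ + c • Δ τ + r • TM (Δ τ),
              deriv (deriv Δ) τ + c • deriv Δ τ + r • TM (deriv Δ τ)⟫
            + ⟪deriv (deriv Δ) τ + c • deriv Δ τ + r • TM (deriv Δ τ),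
              deriv Δ τ + c • Δ τ + r • TM (Δ τ)⟫)) τ := by
    intro τ
    rw [hVfun]
    have h1 := HasDerivAt.inner (𝕜 := ℝ) (hxd τ) (hTd Δ (deriv Δ τ) τ (hxd τ))
    have h2 := HasDerivAt.inner (𝕜 := ℝ) (hwd τ) (hwd τ)
    have hU : HasDerivAt (fun t => deriv Δ t + c • Δ t + r • TM (Δ t))
        (deriv (deriv Δ) τ + c • deriv Δ τ + r • TM (deriv Δ τ)) τ :=
      ((hwd τ).add ((hxd τ).const_smul c)).add ((hTd Δ (deriv Δ τ) τ (hxd τ)).const_smul r)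
    have h3 := HasDerivAt.inner (𝕜 := ℝ) hU hU
    exact (((h1.const_mul (1/2 : ℝ)).const_mul ((1:ℝ)+β)).add (h2.const_mul (1/4 : ℝ))).add
      (h3.const_mul (1/4 : ℝ))
  -- the key dissipation inequality
  have hmain : ∀ τ : ℝ, 0 ≤ τ →
      ((1+β)*((1/2)*(⟪Δ τ, TM (deriv Δ τ)⟫ + ⟪deriv Δ τ, TM (Δ τ)⟫))
        + (1/4)*(⟪deriv Δ τ, deriv (deriv Δ) τ⟫ + ⟪deriv (deriv Δ) τ, deriv Δ τ⟫)
        + (1/4)*(⟪deriv Δ τ + c • Δ τ + r • TM (Δ τ),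
              deriv (deriv Δ) τ + c • deriv Δ τ + r • TM (deriv Δ τ)⟫
            + ⟪deriv (deriv Δ) τ + c • deriv Δ τ + r • TM (deriv Δ τ),
              deriv Δ τ + c • Δ τ + r • TM (Δ τ)⟫))
      + (ρ*(c/2)) * V τ ≤ 0 := by
    intro τ hτ
    have hβcr : (1:ℝ) + β = 1 + c*r/2 := by rw [hβa]; linarith [hcr]
    have hGneg : ∀ i : Fin n,
        (ρ*c/2)*((1+c*r/2)*(μ i)/2*(⟪Δ τ, b i⟫)^2 + (⟪deriv Δ τ, b i⟫)^2/4
            + ((⟪deriv Δ τ, b i⟫)+(c+r*(μ i))*(⟪Δ τ, b i⟫))^2/4)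
          - ((c+r*(μ i))/2*(⟪deriv Δ τ, b i⟫)^2
            + (1+c*r/2)*(μ i)*(c+r*(μ i))/2*(⟪Δ τ, b i⟫)^2) ≤ 0 := by
      intro i
      have hμi : c^2/4 ≤ μ i := by
        have h := hμlow i
        calc c^2/4 = lam0/2 := by rw [hc2]; ring
          _ ≤ μ i := h
      have hcra : c*r/4 = a := by linarith [hcr]
      have hs1 := scalar_ineq c r (μ i) ρ hc0 hr0.le hμi hρ0 hρ23
        (by rw [hcra]; exact hqq) (⟪deriv Δ τ, b i⟫) (⟪Δ τ, b i⟫)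
      linarith [hs1]
    have hW2 : deriv (deriv Δ) τ
        = -(c • deriv Δ τ + (r • TM (deriv Δ τ) + (1+β) • TM (Δ τ))) := by
      have h := hode τ hτ
      rw [add_assoc, add_assoc] at h
      exact eq_neg_of_add_eq_zero_left h
    rw [hV τ]
    simp only [← real_inner_self_eq_norm_sq]
    rw [hW2]
    rw [hPar (Δ τ) (TM (deriv Δ τ)), hPar (deriv Δ τ) (TM (Δ τ)),
      hPar (deriv Δ τ) (-(c • deriv Δ τ + (r • TM (deriv Δ τ) + (1+β) • TM (Δ τ)))),
      hPar (-(c • deriv Δ τ + (r • TM (deriv Δ τ) + (1+β) • TM (Δ τ)))) (deriv Δ τ),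
      hPar (deriv Δ τ + c • Δ τ + r • TM (Δ τ))
        (-(c • deriv Δ τ + (r • TM (deriv Δ τ) + (1+β) • TM (Δ τ))) + c • deriv Δ τ
          + r • TM (deriv Δ τ)),
      hPar (-(c • deriv Δ τ + (r • TM (deriv Δ τ) + (1+β) • TM (Δ τ))) + c • deriv Δ τ
          + r • TM (deriv Δ τ)) (deriv Δ τ + c • Δ τ + r • TM (Δ τ)),
      hPar (Δ τ) (TM (Δ τ)), hPar (deriv Δ τ) (deriv Δ τ),
      hPar (deriv Δ τ + c • Δ τ + r • TM (Δ τ)) (deriv Δ τ + c • Δ τ + r • TM (Δ τ))]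
    simp only [inner_add_left, inner_neg_left, real_inner_smul_left, hco]
    have hle : ∑ i : Fin n,
        ((ρ*c/2)*((1+c*r/2)*(μ i)/2*(⟪Δ τ, b i⟫)^2 + (⟪deriv Δ τ, b i⟫)^2/4
            + ((⟪deriv Δ τ, b i⟫)+(c+r*(μ i))*(⟪Δ τ, b i⟫))^2/4)
          - ((c+r*(μ i))/2*(⟪deriv Δ τ, b i⟫)^2
            + (1+c*r/2)*(μ i)*(c+r*(μ i))/2*(⟪Δ τ, b i⟫)^2)) ≤ 0 :=
      Finset.sum_nonpos fun i _ => hGneg i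
    refine le_of_eq_of_le ?_ hle
    rw [hβcr]
    simp only [Finset.mul_sum, ← Finset.sum_add_distrib]
    refine Finset.sum_congr rfl fun i _ => by ring
  -- Gronwall argument
  have hgd : ∀ τ : ℝ, HasDerivAt (fun τ => Real.exp ((ρ*(c/2))*τ) * V τ)
      ((Real.exp ((ρ*(c/2))*τ) * ((ρ*(c/2))*1)) * V τ + Real.exp ((ρ*(c/2))*τ)
        * ((1+β)*((1/2)*(⟪Δ τ, TM (deriv Δ τ)⟫ + ⟪deriv Δ τ, TM (Δ τ)⟫))
        + (1/4)*(⟪deriv Δ τ, deriv (deriv Δ) τ⟫ + ⟪deriv (deriv Δ) τ, deriv Δ τ⟫)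
        + (1/4)*(⟪deriv Δ τ + c • Δ τ + r • TM (Δ τ),
              deriv (deriv Δ) τ + c • deriv Δ τ + r • TM (deriv Δ τ)⟫
            + ⟪deriv (deriv Δ) τ + c • deriv Δ τ + r • TM (deriv Δ τ),
              deriv Δ τ + c • Δ τ + r • TM (Δ τ)⟫))) τ := by
    intro τ
    exact (((hasDerivAt_id τ).const_mul (ρ*(c/2))).exp).mul (hVd τ)
  have hgdiff : Differentiable ℝ (fun τ => Real.exp ((ρ*(c/2))*τ) * V τ) :=
    fun τ => (hgd τ).differentiableAt
  have hanti : AntitoneOn (fun τ => Real.exp ((ρ*(c/2))*τ) * V τ) (Set.Ici 0) := by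
    apply antitoneOn_of_deriv_nonpos (convex_Ici 0) hgdiff.continuous.continuousOn
      hgdiff.differentiableOn
    intro x hx
    rw [interior_Ici] at hx
    rw [(hgd x).deriv]
    have h0 := hmain x (le_of_lt hx)
    have hE := Real.exp_pos ((ρ*(c/2))*x)
    nlinarith [mul_nonpos_of_nonneg_of_nonpos hE.le h0]
  intro t ht
  have h01 : Real.exp ((ρ*(c/2))*t) * V t ≤ Real.exp ((ρ*(c/2))*0) * V 0 :=
    hanti (Set.mem_Ici.mpr le_rfl) (Set.mem_Ici.mpr ht) ht
  rw [mul_zero, Real.exp_zero, one_mul] at h01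
  have hE := Real.exp_pos ((ρ*(c/2))*t)
  rw [show -ρ * Real.sqrt (lam0 / 2) * t = -((ρ*(c/2))*t) by rw [hsqhalf]; ring,
    Real.exp_neg, le_inv_mul_iff₀ hE]
  exact h01
end

section
/- Let n be a positive integer, H a symmetric n×n real matrix, and λ0, λm, s positive reals with 0 < s ≤ 2/λm, such that (λ0/2)‖v‖² ≤ vᵀHv ≤ λm‖v‖² for all v ∈ ℝⁿ. Let Δ : ℝ → ℝⁿ be twice continuously differentiable and satisfy Δ''(t) + √(2λ0) Δ'(t) + (1 + √(λ0 s/2)) H Δ(t) = 0 for all t ≥ 0, with Δ'(0) = 0. Then the pseudo-loss L̂(t) := (1/2) Δ(t)ᵀ H Δ(t) satisfies, for all t ≥ 0, L̂(t) ≤ ((3 + √(λ0 s/2))/(1 + √(λ0 s/2))) · L̂(0) · exp(−(2−√2) √(λ0/2) t). -/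
open scoped RealInnerProductSpace

set_option maxHeartbeats 2000000 in
theorem hb_pseudo_loss_convergence
    (n : ℕ) (hn : 0 < n) (H : Matrix (Fin n) (Fin n) ℝ) (hHsymm : H.IsSymm)
    (lam0 lamm s : ℝ) (hlam0 : 0 < lam0) (hlamm : 0 < lamm)
    (hs : 0 < s) (hs2 : s ≤ 2 / lamm)
    (hlow : ∀ v : EuclideanSpace ℝ (Fin n),
      lam0 / 2 * ‖v‖ ^ 2 ≤ ⟪v, Matrix.toEuclideanLin H v⟫)
    (hup : ∀ v : EuclideanSpace ℝ (Fin n),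
      ⟪v, Matrix.toEuclideanLin H v⟫ ≤ lamm * ‖v‖ ^ 2)
    (Δ : ℝ → EuclideanSpace ℝ (Fin n)) (hΔ : ContDiff ℝ 2 Δ)
    (hode : ∀ t : ℝ, 0 ≤ t →
      deriv (deriv Δ) t + Real.sqrt (2 * lam0) • deriv Δ t
        + (1 + Real.sqrt (lam0 * s / 2)) • Matrix.toEuclideanLin H (Δ t) = 0)
    (hinit : deriv Δ 0 = 0) :
    ∀ t : ℝ, 0 ≤ t →
      (1 / 2) * ⟪Δ t, Matrix.toEuclideanLin H (Δ t)⟫ ≤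
        (3 + Real.sqrt (lam0 * s / 2)) / (1 + Real.sqrt (lam0 * s / 2)) *
          ((1 / 2) * ⟪Δ 0, Matrix.toEuclideanLin H (Δ 0)⟫) *
          Real.exp (-(2 - Real.sqrt 2) * Real.sqrt (lam0 / 2) * t) := by
  classical
  set A : EuclideanSpace ℝ (Fin n) →ₗ[ℝ] EuclideanSpace ℝ (Fin n) :=
    Matrix.toEuclideanLin H with hAdef
  -- symmetry of A
  have hHerm : H.IsHermitian := by
    rw [Matrix.IsHermitian, Matrix.conjTranspose_eq_transpose_of_trivial]
    exact hHsymm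
  have hAsymm : ∀ x y : EuclideanSpace ℝ (Fin n), ⟪A x, y⟫ = ⟪x, A y⟫ :=
    Matrix.isHermitian_iff_isSymmetric.mp hHerm
  -- constants
  set q : ℝ := Real.sqrt (lam0 * s / 2) with hqdef
  have hq : 0 ≤ q := Real.sqrt_nonneg _
  set c : ℝ := 1 + q with hcdef
  have hc1 : 1 ≤ c := by rw [hcdef]; linarith
  have hc0 : 0 < c := lt_of_lt_of_le one_pos hc1
  set β : ℝ := Real.sqrt (lam0 / 2) with hβdef
  have hβ : 0 < β := Real.sqrt_pos.mpr (by positivity)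
  have hβsq : β ^ 2 = lam0 / 2 := Real.sq_sqrt (by positivity)
  have ha : Real.sqrt (2 * lam0) = 2 * β := by
    rw [hβdef, show 2 * lam0 = 2 ^ 2 * (lam0 / 2) by ring,
      Real.sqrt_mul (by positivity), Real.sqrt_sq (by norm_num)]
  set r : ℝ := Real.sqrt 2 with hrdef
  have hrsq : r ^ 2 = 2 := Real.sq_sqrt (by norm_num)
  have hr0 : 0 ≤ r := Real.sqrt_nonneg 2
  have hr1 : 1 ≤ r := by nlinarith [sq_nonneg (r - 1)]
  have hr2 : r ≤ 2 := by nlinarith [sq_nonneg (r - 2)]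
  set μ : ℝ := (2 - r) * β with hμdef
  -- derivatives of Δ
  set D : ℝ → EuclideanSpace ℝ (Fin n) := deriv Δ with hDdef
  have hΔdiff : Differentiable ℝ Δ := hΔ.differentiable (by norm_num)
  have hd : ∀ t : ℝ, HasDerivAt Δ (D t) t := fun t => (hΔdiff t).hasDerivAt
  have hDdiff : Differentiable ℝ D := by
    have h2 : ContDiff ℝ ((1 : ℕ) + 1) Δ := by exact_mod_cast hΔ
    have := (contDiff_succ_iff_deriv.mp h2).2.2
    exact this.differentiable (by norm_num)
  have hd2 : ∀ t : ℝ, HasDerivAt D (deriv D t) t := fun t => (hDdiff t).hasDerivAt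
  -- continuity of A as a map
  set Acl : EuclideanSpace ℝ (Fin n) →L[ℝ] EuclideanSpace ℝ (Fin n) :=
    LinearMap.toContinuousLinearMap A with hAcl
  have hAclapp : ∀ x, Acl x = A x := fun x => rfl
  have hAd : ∀ t : ℝ, HasDerivAt (fun u => A (Δ u)) (A (D t)) t := fun t => by
    have := Acl.hasFDerivAt.comp_hasDerivAt t (hd t)
    exact this
  -- the quantities
  set P : ℝ → ℝ := fun t => ⟪Δ t, A (Δ t)⟫ with hPdef
  set g : ℝ → EuclideanSpace ℝ (Fin n) := fun t => D t + β • Δ t with hgdef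
  set V : ℝ → ℝ := fun t => c * P t + ⟪g t, g t⟫ with hVdef
  set V' : ℝ → ℝ :=
    fun t => c * (2 * ⟪D t, A (Δ t)⟫) + 2 * ⟪deriv D t + β • D t, g t⟫ with hV'def
  have hPd : ∀ t : ℝ, HasDerivAt P (2 * ⟪D t, A (Δ t)⟫) t := fun t => by
    have h := (hd t).inner ℝ (hAd t)
    have : ⟪Δ t, A (D t)⟫ + ⟪D t, A (Δ t)⟫ = 2 * ⟪D t, A (Δ t)⟫ := by
      rw [← hAsymm, real_inner_comm]; ring
    rw [← this]; exact h
  have hgd : ∀ t : ℝ, HasDerivAt g (deriv D t + β • D t) t := fun t =>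
    (hd2 t).add ((hd t).const_smul β)
  have hGd : ∀ t : ℝ, HasDerivAt (fun u => ⟪g u, g u⟫)
      (2 * ⟪deriv D t + β • D t, g t⟫) t := fun t => by
    have h := (hgd t).inner ℝ (hgd t)
    have : ⟪g t, deriv D t + β • D t⟫ + ⟪deriv D t + β • D t, g t⟫
        = 2 * ⟪deriv D t + β • D t, g t⟫ := by rw [real_inner_comm]; ring
    rw [← this]; exact h
  have hVd : ∀ t : ℝ, HasDerivAt V (V' t) t := fun t =>
    ((hPd t).const_mul c).add (hGd t)
  -- nonnegativity facts
  have hPnn : ∀ t : ℝ, 0 ≤ P t := fun t =>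
    le_trans (by positivity) (hlow (Δ t))
  have hPlow : ∀ t : ℝ, β ^ 2 * ‖Δ t‖ ^ 2 ≤ P t := fun t => by
    rw [hβsq]; exact hlow (Δ t)
  -- key differential inequality
  have hkey : ∀ t : ℝ, 0 ≤ t → V' t + μ * V t ≤ 0 := by
    intro t ht
    have hODE : deriv D t = (-(2 * β)) • D t + (-c) • A (Δ t) := by
      have h := hode t ht
      rw [ha] at h
      linear_combination (norm := module) h
    have e2 : ⟪A (Δ t), D t⟫ = ⟪D t, A (Δ t)⟫ := real_inner_comm _ _
    have e3 : ⟪A (Δ t), Δ t⟫ = ⟪Δ t, A (Δ t)⟫ := real_inner_comm _ _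
    have e4 : ⟪Δ t, D t⟫ = ⟪D t, Δ t⟫ := real_inner_comm _ _
    have hcauchy : -(‖D t‖ * ‖Δ t‖) ≤ ⟪D t, Δ t⟫ :=
      neg_le_of_abs_le (abs_real_inner_le_norm (D t) (Δ t))
    have hVeq : V t = c * P t +
        (⟪D t, D t⟫ + 2 * (β * ⟪D t, Δ t⟫) + β ^ 2 * ⟪Δ t, Δ t⟫) := by
      simp only [hVdef, hgdef, hPdef, inner_add_left, inner_add_right,
        real_inner_smul_left, real_inner_smul_right, e4]
      ring
    have hwsym : ⟪D t, A (Δ t)⟫ = ⟪Δ t, A (D t)⟫ := by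
      rw [← hAsymm, real_inner_comm]
    have hV'eq : V' t = -(2 * β) * ⟪D t, D t⟫ - 2 * β ^ 2 * ⟪D t, Δ t⟫
        - 2 * c * β * P t := by
      have hu : deriv D t + β • D t = (-β) • D t + (-c) • A (Δ t) := by
        rw [hODE]; module
      simp only [hV'def]
      rw [hu]
      simp only [hgdef, hPdef, inner_add_left, inner_add_right,
        real_inner_smul_left, real_inner_smul_right, e2, e3]
      ring
    have hxx : ⟪D t, D t⟫ = ‖D t‖ ^ 2 := real_inner_self_eq_norm_sq (D t)
    have hyy : ⟪Δ t, Δ t⟫ = ‖Δ t‖ ^ 2 := real_inner_self_eq_norm_sq (Δ t)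
    rw [hV'eq, hVeq, hxx, hyy, hμdef]
    set x := D t
    set y := Δ t
    have hX : (0:ℝ) ≤ ‖x‖ := norm_nonneg _
    have hY : (0:ℝ) ≤ ‖y‖ := norm_nonneg _
    have hplow : β ^ 2 * ‖y‖ ^ 2 ≤ P t := hPlow t
    have hpnn : 0 ≤ P t := hPnn t
    have h1 : 0 ≤ (r - 1) * β * (‖x‖ - β * ‖y‖) ^ 2 :=
      mul_nonneg (mul_nonneg (by linarith) hβ.le) (sq_nonneg _)
    have h2 : 0 ≤ (2 * r - 2) * β ^ 2 * (⟪x, y⟫ + ‖x‖ * ‖y‖) :=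
      mul_nonneg (mul_nonneg (by linarith) (by positivity)) (by linarith)
    have h3 : 0 ≤ r * (c - 1) * β * P t :=
      mul_nonneg (mul_nonneg (mul_nonneg (by linarith) (by linarith)) hβ.le) hpnn
    have h4 : 0 ≤ r * β * (P t - β ^ 2 * ‖y‖ ^ 2) :=
      mul_nonneg (mul_nonneg (by linarith) hβ.le) (by linarith)
    have h5 : 0 ≤ β * ‖x‖ ^ 2 := by positivity
    have h6 : 0 ≤ (r - 1) * β ^ 3 * ‖y‖ ^ 2 :=
      mul_nonneg (mul_nonneg (by linarith) (by positivity)) (sq_nonneg _)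
    nlinarith [h1, h2, h3, h4, h5, h6]
  -- Gronwall via antitone
  set W : ℝ → ℝ := fun t => V t * Real.exp (μ * t) with hWdef
  have hWd : ∀ t : ℝ, HasDerivAt W ((V' t + μ * V t) * Real.exp (μ * t)) t := by
    intro t
    have hexp : HasDerivAt (fun u : ℝ => Real.exp (μ * u)) (Real.exp (μ * t) * μ) t := by
      simpa using ((hasDerivAt_id t).const_mul μ).exp
    have := (hVd t).mul hexp
    exact this.congr_deriv (by ring)
  have hanti : AntitoneOn W (Set.Ici 0) := by
    apply antitoneOn_of_deriv_nonpos (convex_Ici 0)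
    · exact fun t _ => ((hWd t).continuousAt).continuousWithinAt
    · exact fun t _ => ((hWd t).differentiableAt).differentiableWithinAt
    · intro t ht
      rw [interior_Ici] at ht
      rw [(hWd t).deriv]
      have := hkey t (le_of_lt ht)
      have he : 0 < Real.exp (μ * t) := Real.exp_pos _
      nlinarith
  intro t ht
  have hW : W t ≤ W 0 := hanti (Set.self_mem_Ici) ht ht
  have hVt : V t ≤ V 0 * Real.exp (-(μ * t)) := by
    have hE : 0 < Real.exp (μ * t) := Real.exp_pos _
    have h0 : V t * Real.exp (μ * t) ≤ V 0 * Real.exp (μ * 0) := hW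
    rw [Real.exp_neg, ← div_eq_mul_inv, le_div_iff₀ hE]
    simpa using h0
  -- bound V 0
  have hg0 : g 0 = β • Δ 0 := by
    simp [hgdef, hinit]
  have hV0 : V 0 ≤ (c + 1) * P 0 := by
    have : ⟪g 0, g 0⟫ = β ^ 2 * ‖Δ 0‖ ^ 2 := by
      rw [hg0, real_inner_smul_left, real_inner_smul_right,
        real_inner_self_eq_norm_sq]
      ring
    rw [hVdef]
    simp only []
    rw [this]
    have := hPlow 0
    linarith
  -- conclude
  have hcP : c * P t ≤ V t := by
    have h : 0 ≤ ⟪g t, g t⟫ := real_inner_self_nonneg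
    show c * P t ≤ c * P t + ⟪g t, g t⟫
    linarith
  have hexp_eq : Real.exp (-(2 - Real.sqrt 2) * Real.sqrt (lam0 / 2) * t)
      = Real.exp (-(μ * t)) := by
    rw [hμdef, hβdef, hrdef]; ring_nf
  have hE : 0 < Real.exp (-(μ * t)) := Real.exp_pos _
  have hP0 : 0 ≤ P 0 := hPnn 0
  have hchain : c * P t ≤ (c + 1) * P 0 * Real.exp (-(μ * t)) := by
    calc c * P t ≤ V t := hcP
      _ ≤ V 0 * Real.exp (-(μ * t)) := hVt
      _ ≤ (c + 1) * P 0 * Real.exp (-(μ * t)) := by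
          exact mul_le_mul_of_nonneg_right hV0 hE.le
  show (1/2) * P t ≤ (3 + q) / (1 + q) * ((1/2) * P 0) *
      Real.exp (-(2 - Real.sqrt 2) * Real.sqrt (lam0 / 2) * t)
  rw [hexp_eq]
  have h3q : (3 + q) / (1 + q) = (c + 2) / c := by rw [hcdef]; ring_nf
  rw [h3q]
  have hre : (c + 2) / c * (1 / 2 * P 0) * Real.exp (-(μ * t))
      = ((c + 2) * (1 / 2 * P 0) * Real.exp (-(μ * t))) / c := by ring
  rw [hre, le_div_iff₀ hc0]
  nlinarith [mul_nonneg hP0 hE.le, hchain]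
end

section
/- Let n be a positive integer, H a symmetric n×n real matrix, and λ0, λm, s positive reals with 0 < s ≤ 2/λm, such that (3λ0/4)‖v‖² ≤ vᵀHv ≤ λm‖v‖² for all v ∈ ℝⁿ. Let Δ : ℝ → ℝⁿ be twice continuously differentiable and satisfy Δ''(t) + √(2λ0) Δ'(t) + √s H Δ'(t) + (1 + √(λ0 s/2)) H Δ(t) = 0 for all t ≥ 0, with Δ'(0) = 0. Set α := √(2 λ0 s)/4 and ρ*_NAG(α) := (1/2)(4 + 3α − √(8 + 16α + 9α²)). Then the pseudo-loss L̂(t) := (1/2) Δ(t)ᵀ H Δ(t) satisfies, for all t ≥ 0, L̂(t) ≤ ((13/3 + √(λ0 s/2))/(1 + √(λ0 s/2))) · L̂(0) · exp(−ρ*_NAG(α) √(λ0/2) t). -/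
open scoped RealInnerProductSpace

/-- Scalar key inequality for the Lyapunov derivative. -/
lemma nag_aux_key (m tq ρ x1 x2 x5 x6 : ℝ) (hm : 0 < m) (ht : 0 ≤ tq)
    (hρ0 : 0 ≤ ρ) (hρ1 : ρ ≤ 2/3) (hx1 : 0 ≤ x1) (hx5 : 0 ≤ x5)
    (hx2 : 3*m^2/8*x1 ≤ x2) (hx6 : 3*m^2/8*x5 ≤ x6) :
    m*(3*ρ/4-1)*x1 - tq*x2 + ρ^2*m^3/16*(2-ρ)*x5 - ρ*m/4*(1+(1-ρ)*m*tq/2)*x6 ≤ 0 := by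
  have h1 : 0 ≤ tq*x2 := mul_nonneg ht (le_trans (by positivity) hx2)
  have h2 : m*(3*ρ/4-1)*x1 ≤ 0 := by
    apply mul_nonpos_of_nonpos_of_nonneg _ hx1
    nlinarith
  have hcoef : 0 ≤ ρ*m/4*(1+(1-ρ)*m*tq/2) := by
    have h1ρ : (0:ℝ) ≤ 1-ρ := by linarith
    have : 0 ≤ (1-ρ)*m*tq/2 := by positivity
    have : 0 ≤ ρ*m/4 := by positivity
    nlinarith
  have h3 : ρ*m/4*(1+(1-ρ)*m*tq/2)*(3*m^2/8*x5) ≤ ρ*m/4*(1+(1-ρ)*m*tq/2)*x6 :=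
    mul_le_mul_of_nonneg_left hx6 hcoef
  have h4 : ρ^2*m^3/16*(2-ρ)*x5 ≤ ρ*m/4*(1+(1-ρ)*m*tq/2)*(3*m^2/8*x5) := by
    have h1ρ : (0:ℝ) ≤ 1-ρ := by linarith
    have hA : ρ^2*(2-ρ) ≤ 3*ρ/2 := by nlinarith
    have hB : ρ^2*m^3/16*(2-ρ)*x5 ≤ 3*ρ/2*m^3/16*x5 := by
      have := mul_le_mul_of_nonneg_right hA (show (0:ℝ) ≤ m^3/16*x5 by positivity)
      nlinarith
    have hC : 3*ρ/2*m^3/16*x5 ≤ ρ*m/4*(1+(1-ρ)*m*tq/2)*(3*m^2/8*x5) := by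
      have : 0 ≤ ρ*m/4*((1-ρ)*m*tq/2)*(3*m^2/8*x5) := by positivity
      nlinarith
    linarith
  linarith

/-- Scalar constant inequality for the final bound. -/
lemma nag_aux_const (ρ β : ℝ) (hρ0 : 0 ≤ ρ) (hρ1 : ρ ≤ 2/3) (hβ : 0 ≤ β) :
    (1+β+ρ*β+4*ρ/3-2*ρ^2/3)*(1+β) ≤ (1+β+ρ*β)*(13/3+β) := by nlinarith

set_option maxHeartbeats 1000000 in
theorem nag_pseudo_loss_convergence
    (n : ℕ) (hn : 0 < n) (H : Matrix (Fin n) (Fin n) ℝ) (hHsymm : H.IsSymm)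
    (lam0 lamm s : ℝ) (hlam0 : 0 < lam0) (hlamm : 0 < lamm)
    (hs : 0 < s) (hs2 : s ≤ 2 / lamm)
    (hlow : ∀ v : EuclideanSpace ℝ (Fin n),
      3 * lam0 / 4 * ‖v‖ ^ 2 ≤ ⟪v, Matrix.toEuclideanLin H v⟫)
    (hup : ∀ v : EuclideanSpace ℝ (Fin n),
      ⟪v, Matrix.toEuclideanLin H v⟫ ≤ lamm * ‖v‖ ^ 2)
    (Δ : ℝ → EuclideanSpace ℝ (Fin n)) (hΔ : ContDiff ℝ 2 Δ)
    (hode : ∀ t : ℝ, 0 ≤ t →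
      deriv (deriv Δ) t + Real.sqrt (2 * lam0) • deriv Δ t
        + Real.sqrt s • Matrix.toEuclideanLin H (deriv Δ t)
        + (1 + Real.sqrt (lam0 * s / 2)) • Matrix.toEuclideanLin H (Δ t) = 0)
    (hinit : deriv Δ 0 = 0) :
    ∀ t : ℝ, 0 ≤ t →
      (1 / 2) * ⟪Δ t, Matrix.toEuclideanLin H (Δ t)⟫ ≤
        (13 / 3 + Real.sqrt (lam0 * s / 2)) / (1 + Real.sqrt (lam0 * s / 2)) *
          ((1 / 2) * ⟪Δ 0, Matrix.toEuclideanLin H (Δ 0)⟫) *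
          Real.exp (-((1 / 2) * (4 + 3 * (Real.sqrt (2 * lam0 * s) / 4)
              - Real.sqrt (8 + 16 * (Real.sqrt (2 * lam0 * s) / 4)
                  + 9 * (Real.sqrt (2 * lam0 * s) / 4) ^ 2)))
            * Real.sqrt (lam0 / 2) * t) := by
  -- basic scalars
  set m : ℝ := Real.sqrt (2 * lam0) with hm_def
  set tq : ℝ := Real.sqrt s with htq_def
  have hm0 : 0 < m := Real.sqrt_pos.mpr (by linarith)
  have hm2 : m ^ 2 = 2 * lam0 := Real.sq_sqrt (by linarith)
  have ht0 : 0 ≤ tq := Real.sqrt_nonneg s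
  have ht2 : tq ^ 2 = s := Real.sq_sqrt hs.le
  set β : ℝ := m * tq / 2 with hβ_def
  have hβ0 : 0 ≤ β := by rw [hβ_def]; positivity
  have hβeq : Real.sqrt (lam0 * s / 2) = β := by
    have hsq : β ^ 2 = lam0 * s / 2 := by
      rw [hβ_def, div_pow, mul_pow, hm2, ht2]; ring
    rw [← hsq, Real.sqrt_sq hβ0]
  have hαeq : Real.sqrt (2 * lam0 * s) = m * tq := by
    have hsq : (m * tq) ^ 2 = 2 * lam0 * s := by rw [mul_pow, hm2, ht2]
    rw [← hsq, Real.sqrt_sq (by positivity)]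
  have hhalf : Real.sqrt (lam0 / 2) = m / 2 := by
    have hsq : (m / 2) ^ 2 = lam0 / 2 := by rw [div_pow, hm2]; ring
    rw [← hsq, Real.sqrt_sq (by positivity)]
  set S : ℝ := Real.sqrt (8 + 16 * (m * tq / 4) + 9 * (m * tq / 4) ^ 2) with hS_def
  have hS0 : 0 ≤ S := Real.sqrt_nonneg _
  have hS2 : S ^ 2 = 8 + 16 * (m * tq / 4) + 9 * (m * tq / 4) ^ 2 :=
    Real.sq_sqrt (by positivity)
  set ρ : ℝ := 1 / 2 * (4 + 3 * (m * tq / 4) - S) with hρ_def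
  have hmt0 : 0 ≤ m * tq := by positivity
  have hSub : S ≤ 4 + 3 * (m * tq / 4) := by
    rw [hS_def]
    calc Real.sqrt (8 + 16 * (m * tq / 4) + 9 * (m * tq / 4) ^ 2)
        ≤ Real.sqrt ((4 + 3 * (m * tq / 4)) ^ 2) := Real.sqrt_le_sqrt (by nlinarith)
      _ = 4 + 3 * (m * tq / 4) := Real.sqrt_sq (by positivity)
  have hSlb : 8 / 3 + 3 * (m * tq / 4) ≤ S := by
    rw [hS_def]
    calc (8:ℝ) / 3 + 3 * (m * tq / 4)
        = Real.sqrt ((8 / 3 + 3 * (m * tq / 4)) ^ 2) := (Real.sqrt_sq (by positivity)).symm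
      _ ≤ Real.sqrt (8 + 16 * (m * tq / 4) + 9 * (m * tq / 4) ^ 2) :=
          Real.sqrt_le_sqrt (by nlinarith)
  have hρ0 : 0 ≤ ρ := by rw [hρ_def]; linarith
  have hρ1 : ρ ≤ 2 / 3 := by rw [hρ_def]; linarith
  set a : ℝ := ρ * m / 2 with ha_def
  set κ : ℝ := ρ * m / 2 with hκ_def
  set c1 : ℝ := 1 + β + ρ * β with hc1_def
  set c2 : ℝ := ρ * (1 - ρ) * m ^ 2 / 2 with hc2_def
  have hρβ : 0 ≤ ρ * β := mul_nonneg hρ0 hβ0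
  have hc10 : (1:ℝ) ≤ c1 := by rw [hc1_def]; linarith
  have hc20 : 0 ≤ c2 := by
    rw [hc2_def]
    have h1 : (0:ℝ) ≤ 1 - ρ := by linarith
    positivity
  -- the operator
  set Hc : EuclideanSpace ℝ (Fin n) →L[ℝ] EuclideanSpace ℝ (Fin n) :=
    LinearMap.toContinuousLinearMap (Matrix.toEuclideanLin H) with hHc_def
  have hHcapp : ∀ v : EuclideanSpace ℝ (Fin n), Matrix.toEuclideanLin H v = Hc v :=
    fun _ => rfl
  have hsym : ∀ u v : EuclideanSpace ℝ (Fin n), ⟪Hc u, v⟫ = ⟪u, Hc v⟫ := by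
    have hherm : H.IsHermitian := by
      rw [Matrix.IsHermitian, Matrix.conjTranspose_eq_transpose_of_trivial]
      exact hHsymm
    have h := Matrix.isHermitian_iff_isSymmetric.mp hherm
    intro u v; exact h u v
  have hlow' : ∀ v : EuclideanSpace ℝ (Fin n), 3 * m ^ 2 / 8 * ⟪v, v⟫ ≤ ⟪v, Hc v⟫ := by
    intro v
    have h1 := hlow v
    rw [hHcapp v] at h1
    have h2 : (3:ℝ) * m ^ 2 / 8 * ⟪v, v⟫ = 3 * lam0 / 4 * ‖v‖ ^ 2 := by
      rw [real_inner_self_eq_norm_sq v, hm2]; ring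
    rw [h2]; exact h1
  have hinner_nonneg : ∀ v : EuclideanSpace ℝ (Fin n), 0 ≤ ⟪v, Hc v⟫ := by
    intro v
    refine le_trans ?_ (hlow' v)
    have := real_inner_self_nonneg (x := v)
    positivity
  -- differentiability
  have h2 : ContDiff ℝ (1 + 1) Δ := by exact_mod_cast hΔ
  have hsucc := contDiff_succ_iff_deriv.mp h2
  have hΔd : Differentiable ℝ Δ := hsucc.1
  have hDd : Differentiable ℝ (deriv Δ) := hsucc.2.2.differentiable one_ne_zero
  -- Lyapunov function
  set E : ℝ → ℝ := fun τ =>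
    1 / 2 * ⟪deriv Δ τ + a • Δ τ, deriv Δ τ + a • Δ τ⟫
      + c1 / 2 * ⟪Δ τ, Hc (Δ τ)⟫ + c2 / 2 * ⟪Δ τ, Δ τ⟫ with hE_def
  set e' : ℝ → ℝ := fun τ =>
    1 / 2 * (⟪deriv Δ τ + a • Δ τ, deriv (deriv Δ) τ + a • deriv Δ τ⟫
        + ⟪deriv (deriv Δ) τ + a • deriv Δ τ, deriv Δ τ + a • Δ τ⟫)
      + c1 / 2 * (⟪Δ τ, Hc (deriv Δ τ)⟫ + ⟪deriv Δ τ, Hc (Δ τ)⟫)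
      + c2 / 2 * (⟪Δ τ, deriv Δ τ⟫ + ⟪deriv Δ τ, Δ τ⟫) with he'_def
  have hE : ∀ τ : ℝ, HasDerivAt E (e' τ) τ := by
    intro τ
    have hΔ' : HasDerivAt Δ (deriv Δ τ) τ := (hΔd τ).hasDerivAt
    have hD' : HasDerivAt (deriv Δ) (deriv (deriv Δ) τ) τ := (hDd τ).hasDerivAt
    have hW : HasDerivAt (fun x => deriv Δ x + a • Δ x)
        (deriv (deriv Δ) τ + a • deriv Δ τ) τ := hD'.add (hΔ'.const_smul a)
    have hHΔ : HasDerivAt (fun x => Hc (Δ x)) (Hc (deriv Δ τ)) τ :=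
      Hc.hasFDerivAt.comp_hasDerivAt τ hΔ'
    exact (((hW.inner ℝ hW).const_mul _).add ((hΔ'.inner ℝ hHΔ).const_mul _)).add
      ((hΔ'.inner ℝ hΔ').const_mul _)
  -- key differential inequality
  have key : ∀ x : ℝ, 0 ≤ x → e' x + κ * E x ≤ 0 := by
    intro x hx
    have h := hode x hx
    rw [hβeq] at h
    simp only [hHcapp] at h
    rw [add_assoc, add_assoc, add_eq_zero_iff_eq_neg] at h
    have hD2 : deriv (deriv Δ) x =
        (-(m • deriv Δ x)) - tq • Hc (deriv Δ x) - (1 + β) • Hc (Δ x) := by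
      rw [h]; abel
    simp only [hE_def, he'_def]
    rw [hD2]
    -- symmetry rewrites
    have eΔD : ⟪Δ x, deriv Δ x⟫ = ⟪deriv Δ x, Δ x⟫ := real_inner_comm _ _
    have eHDD : ⟪Hc (deriv Δ x), deriv Δ x⟫ = ⟪deriv Δ x, Hc (deriv Δ x)⟫ :=
      real_inner_comm _ _
    have eHΔD : ⟪Hc (Δ x), deriv Δ x⟫ = ⟪deriv Δ x, Hc (Δ x)⟫ := real_inner_comm _ _
    have eΔHD : ⟪Δ x, Hc (deriv Δ x)⟫ = ⟪deriv Δ x, Hc (Δ x)⟫ := by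
      rw [← hsym (Δ x) (deriv Δ x)]; exact real_inner_comm _ _
    have eHDΔ : ⟪Hc (deriv Δ x), Δ x⟫ = ⟪deriv Δ x, Hc (Δ x)⟫ :=
      hsym (deriv Δ x) (Δ x)
    have eHΔΔ : ⟪Hc (Δ x), Δ x⟫ = ⟪Δ x, Hc (Δ x)⟫ := real_inner_comm _ _
    simp only [inner_add_left, inner_add_right, inner_sub_left, inner_sub_right,
      inner_neg_left, inner_neg_right, real_inner_smul_left, real_inner_smul_right]
    rw [eΔD, eHDD, eHΔD, eΔHD, eHDΔ, eHΔΔ]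
    have hx1 : 0 ≤ ⟪deriv Δ x, deriv Δ x⟫ := real_inner_self_nonneg
    have hx5 : 0 ≤ ⟪Δ x, Δ x⟫ := real_inner_self_nonneg
    have hx2 := hlow' (deriv Δ x)
    have hx6 := hlow' (Δ x)
    have hKey := nag_aux_key m tq ρ ⟪deriv Δ x, deriv Δ x⟫ ⟪deriv Δ x, Hc (deriv Δ x)⟫
      ⟪Δ x, Δ x⟫ ⟪Δ x, Hc (Δ x)⟫ hm0 ht0 hρ0 hρ1 hx1 hx5 hx2 hx6
    rw [ha_def, hκ_def, hc1_def, hc2_def, hβ_def]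
    refine le_trans (le_of_eq ?_) hKey
    ring
  -- Gronwall
  have hEdiff : Differentiable ℝ E := fun τ => (hE τ).differentiableAt
  set F : ℝ → ℝ := fun τ => E τ * Real.exp (κ * τ) with hF_def
  have hF : ∀ τ : ℝ, HasDerivAt F (e' τ * Real.exp (κ * τ) + E τ * (Real.exp (κ * τ) * κ)) τ := by
    intro τ
    have hexp : HasDerivAt (fun x : ℝ => Real.exp (κ * x)) (Real.exp (κ * τ) * κ) τ := by
      simpa using (HasDerivAt.exp ((hasDerivAt_id τ).const_mul κ))
    exact (hE τ).mul hexp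
  have hFanti : AntitoneOn F (Set.Ici (0:ℝ)) := by
    have hFdiff : Differentiable ℝ F := fun τ => (hF τ).differentiableAt
    apply antitoneOn_of_deriv_nonpos (convex_Ici 0)
    · exact hFdiff.continuous.continuousOn
    · exact hFdiff.differentiableOn
    · intro x hx
      rw [interior_Ici] at hx
      rw [(hF x).deriv]
      have hk := key x (le_of_lt hx)
      have hrw : e' x * Real.exp (κ * x) + E x * (Real.exp (κ * x) * κ)
          = (e' x + κ * E x) * Real.exp (κ * x) := by ring
      rw [hrw]
      exact mul_nonpos_of_nonpos_of_nonneg hk (Real.exp_pos _).le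
  have hdecay : ∀ t : ℝ, 0 ≤ t → E t ≤ E 0 * Real.exp (-(κ * t)) := by
    intro t ht
    have h1 : F t ≤ F 0 := hFanti Set.self_mem_Ici (Set.mem_Ici.mpr ht) ht
    have h2 : E t * Real.exp (κ * t) ≤ E 0 := by
      have : F 0 = E 0 := by simp [hF_def]
      rw [← this]; exact h1
    rw [Real.exp_neg, ← div_eq_mul_inv, le_div_iff₀ (Real.exp_pos _)]
    exact h2
  -- final assembly
  intro t ht
  rw [hβeq, hαeq, hhalf, ← hS_def]
  have hexpA : Real.exp (-(1 / 2 * (4 + 3 * (m * tq / 4) - S)) * (m / 2) * t)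
      = Real.exp (-(κ * t)) := by
    congr 1
    rw [hκ_def, hρ_def]; ring
  rw [hexpA]
  -- lower bound on E t
  have hEt_lb : c1 / 2 * ⟪Δ t, Hc (Δ t)⟫ ≤ E t := by
    simp only [hE_def]
    have h1 : 0 ≤ 1 / 2 * ⟪deriv Δ t + a • Δ t, deriv Δ t + a • Δ t⟫ := by
      have : 0 ≤ ⟪deriv Δ t + a • Δ t, deriv Δ t + a • Δ t⟫ := real_inner_self_nonneg
      linarith
    have h2 : 0 ≤ c2 / 2 * ⟪Δ t, Δ t⟫ := by
      have : 0 ≤ ⟪Δ t, Δ t⟫ := real_inner_self_nonneg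
      positivity
    linarith
  -- upper bound on E 0
  have hE0_ub : E 0 ≤ (c1 + 4 * ρ / 3 - 2 * ρ ^ 2 / 3) * (1 / 2 * ⟪Δ 0, Hc (Δ 0)⟫) := by
    have hx6 := hlow' (Δ 0)
    have hcoefnn : 0 ≤ (2 * ρ / 3 - ρ ^ 2 / 3) := by nlinarith
    have hmul := mul_le_mul_of_nonneg_left hx6 hcoefnn
    have hE0val : E 0 = ((ρ * m / 2) ^ 2 / 2 + ρ * (1 - ρ) * m ^ 2 / 2 / 2) * ⟪Δ 0, Δ 0⟫
        + c1 / 2 * ⟪Δ 0, Hc (Δ 0)⟫ := by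
      simp only [hE_def, hinit, zero_add, real_inner_smul_left, real_inner_smul_right,
        ha_def]
      ring
    rw [hE0val]
    calc ((ρ * m / 2) ^ 2 / 2 + ρ * (1 - ρ) * m ^ 2 / 2 / 2) * ⟪Δ 0, Δ 0⟫
          + c1 / 2 * ⟪Δ 0, Hc (Δ 0)⟫
        = (2 * ρ / 3 - ρ ^ 2 / 3) * (3 * m ^ 2 / 8 * ⟪Δ 0, Δ 0⟫)
          + c1 / 2 * ⟪Δ 0, Hc (Δ 0)⟫ := by ring
      _ ≤ (2 * ρ / 3 - ρ ^ 2 / 3) * ⟪Δ 0, Hc (Δ 0)⟫ + c1 / 2 * ⟪Δ 0, Hc (Δ 0)⟫ := by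
          linarith [hmul]
      _ = (c1 + 4 * ρ / 3 - 2 * ρ ^ 2 / 3) * (1 / 2 * ⟪Δ 0, Hc (Δ 0)⟫) := by ring
  -- combine
  have hx60 : 0 ≤ ⟪Δ 0, Hc (Δ 0)⟫ := hinner_nonneg (Δ 0)
  have hexp0 : (0:ℝ) < Real.exp (-(κ * t)) := Real.exp_pos _
  have hconst : c1 + 4 * ρ / 3 - 2 * ρ ^ 2 / 3 ≤ c1 * ((13 / 3 + β) / (1 + β)) := by
    rw [mul_div_assoc', le_div_iff₀ (by linarith : (0:ℝ) < 1 + β)]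
    have := nag_aux_const ρ β hρ0 hρ1 hβ0
    rw [hc1_def]
    nlinarith [this]
  have chain : c1 / 2 * ⟪Δ t, Hc (Δ t)⟫ ≤
      c1 * ((13 / 3 + β) / (1 + β) * (1 / 2 * ⟪Δ 0, Hc (Δ 0)⟫) * Real.exp (-(κ * t))) := by
    calc c1 / 2 * ⟪Δ t, Hc (Δ t)⟫ ≤ E t := hEt_lb
      _ ≤ E 0 * Real.exp (-(κ * t)) := hdecay t ht
      _ ≤ ((c1 + 4 * ρ / 3 - 2 * ρ ^ 2 / 3) * (1 / 2 * ⟪Δ 0, Hc (Δ 0)⟫)) * Real.exp (-(κ * t)) :=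
          mul_le_mul_of_nonneg_right hE0_ub hexp0.le
      _ ≤ (c1 * ((13 / 3 + β) / (1 + β)) * (1 / 2 * ⟪Δ 0, Hc (Δ 0)⟫)) * Real.exp (-(κ * t)) := by
          apply mul_le_mul_of_nonneg_right _ hexp0.le
          apply mul_le_mul_of_nonneg_right hconst (by linarith)
      _ = c1 * ((13 / 3 + β) / (1 + β) * (1 / 2 * ⟪Δ 0, Hc (Δ 0)⟫) * Real.exp (-(κ * t))) := by
          ring
  have hc1pos : (0:ℝ) < c1 := by linarith
  have final := le_of_mul_le_mul_left (by
    calc c1 * (1 / 2 * ⟪Δ t, Hc (Δ t)⟫) = c1 / 2 * ⟪Δ t, Hc (Δ t)⟫ := by ring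
      _ ≤ c1 * ((13 / 3 + β) / (1 + β) * (1 / 2 * ⟪Δ 0, Hc (Δ 0)⟫) * Real.exp (-(κ * t))) :=
        chain) hc1pos
  simpa only [hHcapp] using final
end

section
/- Let d be a positive integer, b, c, A real numbers with 0 < c < b and A ≥ 0, and g : ℝ → ℝ^d a continuous function with ‖g(t)‖ ≤ A e^{−c t} for all t ≥ 0. Let u : ℝ → ℝ^d be twice continuously differentiable with u'(0) = 0 and u''(t) + b u'(t) + g(t) = 0 for all t ≥ 0. Then for all t ≥ 0: (i) ‖u'(t)‖ ≤ (A/(b − c)) e^{−c t}, and (ii) ‖u(t) − u(0)‖ ≤ A/(c (b − c)). -/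
theorem weight_drift_bound
    (d : ℕ) (hd : 0 < d) (b c A : ℝ) (hc : 0 < c) (hcb : c < b) (hA : 0 ≤ A)
    (g : ℝ → EuclideanSpace ℝ (Fin d)) (hg : Continuous g)
    (hgb : ∀ t : ℝ, 0 ≤ t → ‖g t‖ ≤ A * Real.exp (-c * t))
    (u : ℝ → EuclideanSpace ℝ (Fin d)) (hu : ContDiff ℝ 2 u)
    (hu0 : deriv u 0 = 0)
    (hode : ∀ t : ℝ, 0 ≤ t → deriv (deriv u) t + b • deriv u t + g t = 0) :
    ∀ t : ℝ, 0 ≤ t →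
      ‖deriv u t‖ ≤ A / (b - c) * Real.exp (-c * t) ∧
        ‖u t - u 0‖ ≤ A / (c * (b - c)) := by
  have hbc : (0:ℝ) < b - c := by linarith
  have hb : (0:ℝ) < b := lt_trans hc hcb
  have hud : Differentiable ℝ u := hu.differentiable (by norm_num)
  have hdu : ContDiff ℝ 1 (deriv u) :=
    ((contDiff_succ_iff_deriv (n := 1)).mp
      (hu.of_le (by norm_num : ((1:WithTop ℕ∞)+1) ≤ 2))).2.2
  have hvd : Differentiable ℝ (deriv u) := hdu.differentiable (by norm_num)
  have hvc : Continuous (deriv u) := hvd.continuous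
  -- derivative of w τ = exp(bτ) • deriv u τ
  have hw : ∀ t : ℝ, 0 ≤ t →
      HasDerivAt (fun τ => Real.exp (b*τ) • deriv u τ) (-(Real.exp (b*t) • g t)) t := by
    intro t ht
    have h1 : HasDerivAt (fun τ : ℝ => Real.exp (b*τ)) (Real.exp (b*t) * b) t := by
      have : HasDerivAt (fun τ : ℝ => b * τ) b t := by
        simpa using (hasDerivAt_id t).const_mul b
      exact this.exp
    have h2 : HasDerivAt (deriv u) (deriv (deriv u) t) t :=
      (hvd t).hasDerivAt
    have hsum := h1.smul h2
    have h3 : deriv (deriv u) t + b • deriv u t = - g t :=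
      eq_neg_of_add_eq_zero_left (hode t ht)
    have h4 : g t = -(deriv (deriv u) t + b • deriv u t) := by rw [h3, neg_neg]
    refine hsum.congr_deriv ?_
    rw [h4]
    module
  have hint : ∀ t : ℝ, 0 ≤ t →
      Real.exp (b*t) • deriv u t = - ∫ τ in (0:ℝ)..t, Real.exp (b*τ) • g τ := by
    intro t ht
    have hcont : Continuous fun τ : ℝ => -(Real.exp (b*τ) • g τ) :=
      (((Real.continuous_exp.comp (continuous_const.mul continuous_id)).smul hg)).neg
    have heq := intervalIntegral.integral_eq_sub_of_hasDerivAt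
      (f := fun τ => Real.exp (b*τ) • deriv u τ)
      (f' := fun τ => -(Real.exp (b*τ) • g τ))
      (fun x hx => hw x (by rw [Set.uIcc_of_le ht] at hx; exact hx.1))
      (hcont.intervalIntegrable 0 t)
    rw [intervalIntegral.integral_neg] at heq
    simp only [mul_zero, Real.exp_zero, hu0, smul_zero, sub_zero] at heq
    exact heq.symm
  -- generic exponential integral
  have hgen : ∀ (K k : ℝ), k ≠ 0 → ∀ t : ℝ,
      (∫ τ in (0:ℝ)..t, K * Real.exp (k*τ)) = K/k * (Real.exp (k*t) - 1) := by
    intro K k hk t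
    have hF : ∀ x : ℝ, HasDerivAt (fun τ => K/k * Real.exp (k*τ)) (K * Real.exp (k*x)) x := by
      intro x
      have h1 : HasDerivAt (fun τ : ℝ => k * τ) k x := by
        simpa using (hasDerivAt_id x).const_mul k
      have h2 := (h1.exp).const_mul (K/k)
      refine h2.congr_deriv ?_
      rw [div_mul_eq_mul_div, div_eq_iff hk]
      ring
    have hcont : Continuous fun τ : ℝ => K * Real.exp (k*τ) :=
      continuous_const.mul (Real.continuous_exp.comp (continuous_const.mul continuous_id))
    rw [intervalIntegral.integral_eq_sub_of_hasDerivAt (fun x _ => hF x)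
      (hcont.intervalIntegrable 0 t), mul_zero, Real.exp_zero]
    ring
  have hA' : 0 ≤ A/(b-c) := div_nonneg hA hbc.le
  have key : ∀ t : ℝ, 0 ≤ t → ‖deriv u t‖ ≤ A / (b - c) * Real.exp (-c * t) := by
    intro t ht
    have hnorm : ‖Real.exp (b*t) • deriv u t‖ ≤ A/(b-c) * (Real.exp ((b-c)*t) - 1) := by
      rw [hint t ht, norm_neg]
      have h1 : ‖∫ τ in (0:ℝ)..t, Real.exp (b*τ) • g τ‖
          ≤ ∫ τ in (0:ℝ)..t, ‖Real.exp (b*τ) • g τ‖ :=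
        intervalIntegral.norm_integral_le_integral_norm ht
      have h2 : (∫ τ in (0:ℝ)..t, ‖Real.exp (b*τ) • g τ‖)
          ≤ ∫ τ in (0:ℝ)..t, A * Real.exp ((b-c)*τ) := by
        apply intervalIntegral.integral_mono_on ht
        · exact (((Real.continuous_exp.comp (continuous_const.mul continuous_id)).smul
            hg).norm).intervalIntegrable 0 t
        · exact (continuous_const.mul (Real.continuous_exp.comp
            (continuous_const.mul continuous_id))).intervalIntegrable 0 t
        · intro x hx
          rw [norm_smul, Real.norm_eq_abs, abs_of_pos (Real.exp_pos _)]
          calc Real.exp (b*x) * ‖g x‖ ≤ Real.exp (b*x) * (A * Real.exp (-c*x)) :=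
                mul_le_mul_of_nonneg_left (hgb x hx.1) (Real.exp_pos _).le
            _ = A * Real.exp ((b-c)*x) := by
                rw [mul_comm (Real.exp (b*x)), mul_assoc, ← Real.exp_add]
                ring_nf
      calc ‖∫ τ in (0:ℝ)..t, Real.exp (b*τ) • g τ‖
          ≤ ∫ τ in (0:ℝ)..t, A * Real.exp ((b-c)*τ) := le_trans h1 h2
        _ = A/(b-c) * (Real.exp ((b-c)*t) - 1) := hgen A (b-c) (ne_of_gt hbc) t
    have hnorm2 : Real.exp (b*t) * ‖deriv u t‖ ≤ A/(b-c) * (Real.exp ((b-c)*t) - 1) := by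
      rwa [norm_smul, Real.norm_eq_abs, abs_of_pos (Real.exp_pos _)] at hnorm
    have hEt : (0:ℝ) < Real.exp (b*t) := Real.exp_pos _
    rw [← mul_le_mul_iff_right₀ hEt]
    calc Real.exp (b*t) * ‖deriv u t‖ ≤ A/(b-c) * (Real.exp ((b-c)*t) - 1) := hnorm2
      _ ≤ A/(b-c) * Real.exp ((b-c)*t) :=
          mul_le_mul_of_nonneg_left (by linarith) hA'
      _ = Real.exp (b*t) * (A/(b-c) * Real.exp (-c*t)) := by
          rw [show (b-c)*t = b*t + (-c*t) by ring, Real.exp_add]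
          ring
  intro t ht
  refine ⟨key t ht, ?_⟩
  have hiu : u t - u 0 = ∫ τ in (0:ℝ)..t, deriv u τ :=
    (intervalIntegral.integral_deriv_eq_sub (fun x _ => hud x)
      (hvc.intervalIntegrable 0 t)).symm
  rw [hiu]
  have h1 : ‖∫ τ in (0:ℝ)..t, deriv u τ‖ ≤ ∫ τ in (0:ℝ)..t, ‖deriv u τ‖ :=
    intervalIntegral.norm_integral_le_integral_norm ht
  have h2 : (∫ τ in (0:ℝ)..t, ‖deriv u τ‖)
      ≤ ∫ τ in (0:ℝ)..t, (A/(b-c)) * Real.exp ((-c)*τ) := by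
    apply intervalIntegral.integral_mono_on ht
    · exact hvc.norm.intervalIntegrable 0 t
    · exact (continuous_const.mul (Real.continuous_exp.comp
        (continuous_const.mul continuous_id))).intervalIntegrable 0 t
    · intro x hx
      exact key x hx.1
  have h3 : (∫ τ in (0:ℝ)..t, (A/(b-c)) * Real.exp ((-c)*τ))
      = (A/(b-c))/(-c) * (Real.exp ((-c)*t) - 1) :=
    hgen (A/(b-c)) (-c) (by linarith) t
  have hE : 0 < Real.exp ((-c)*t) := Real.exp_pos _
  have hE1 : Real.exp ((-c)*t) ≤ 1 := by
    rw [Real.exp_le_one_iff]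
    nlinarith
  have h4 : (A/(b-c))/(-c) * (Real.exp ((-c)*t) - 1) ≤ A / (c * (b - c)) := by
    have heq : (A/(b-c))/(-c) * (Real.exp ((-c)*t) - 1)
        = A/(b-c) * ((1 - Real.exp ((-c)*t))/c) := by
      field_simp
      ring
    have heq2 : A / (c * (b - c)) = A/(b-c) * (1/c) := by
      rw [div_mul_eq_mul_div, mul_one_div, div_div, mul_comm]
    rw [heq, heq2]
    apply mul_le_mul_of_nonneg_left _ hA'
    gcongr
    linarith
  calc ‖∫ τ in (0:ℝ)..t, deriv u τ‖ ≤ ∫ τ in (0:ℝ)..t, (A/(b-c)) * Real.exp ((-c)*τ) :=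
        le_trans h1 h2
    _ = (A/(b-c))/(-c) * (Real.exp ((-c)*t) - 1) := h3
    _ ≤ A / (c * (b - c)) := h4
end

section
/- Let x₁, …, xₙ ∈ ℝ^d be unit vectors such that for all i ≠ j, xᵢ ≠ xⱼ and xᵢ ≠ −xⱼ (i.e., no two data points are parallel). Define the n×n matrix H∞ by H∞_{ij} = ⟨xᵢ, xⱼ⟩ · γ({ w ∈ ℝ^d : ⟨w, xᵢ⟩ ≥ 0 and ⟨w, xⱼ⟩ ≥ 0 }), where γ is the standard Gaussian measure N(0, I_d) on ℝ^d. Then H∞ is symmetric positive definite; in particular its smallest eigenvalue λ0 := λ_min(H∞) is strictly positive. -/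
open MeasureTheory Matrix

instance : (ProbabilityTheory.gaussianReal 0 1).IsOpenPosMeasure := by
  constructor
  intro U hU hne h0
  exact hU.measure_ne_zero volume hne
    (ProbabilityTheory.gaussianReal_absolutelyContinuous' 0 one_ne_zero h0)

lemma ntk_sum_dot {ι : Type*} {d : ℕ} (s : Finset ι) (u : ι → (Fin d → ℝ)) (z : Fin d → ℝ) :
    (∑ i ∈ s, u i) ⬝ᵥ z = ∑ i ∈ s, (u i ⬝ᵥ z) := by
  simp only [dotProduct, Finset.sum_apply, Finset.sum_mul]
  exact Finset.sum_comm

lemma ntk_dot_sum {ι : Type*} {d : ℕ} (s : Finset ι) (z : Fin d → ℝ) (u : ι → (Fin d → ℝ)) :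
    z ⬝ᵥ (∑ i ∈ s, u i) = ∑ i ∈ s, (z ⬝ᵥ u i) := by
  simp only [dotProduct, Finset.sum_apply, Finset.mul_sum]
  exact Finset.sum_comm

lemma ntk_cont_dot {d : ℕ} (y : Fin d → ℝ) : Continuous fun w : Fin d → ℝ => w ⬝ᵥ y := by
  simp only [dotProduct]
  exact continuous_finset_sum _ fun k _ => (continuous_apply k).mul continuous_const

/-- A point avoiding finitely many hyperplanes. -/
lemma ntk_avoid {d n : ℕ} (y : Fin n → (Fin d → ℝ)) (i : Fin n)
    (hy : ∀ j, j ≠ i → y j ≠ 0) :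
    ∃ w : Fin d → ℝ, ∀ j, j ≠ i → w ⬝ᵥ y j ≠ 0 := by
  by_contra h
  push_neg at h
  have hcover : (Set.univ : Set (Fin d → ℝ)) ⊆ ⋃ j : Fin n, {w | j ≠ i ∧ w ⬝ᵥ y j = 0} := by
    intro w _
    obtain ⟨j, hj, hw⟩ := h w
    exact Set.mem_iUnion.2 ⟨j, hj, hw⟩
  have hnull : (volume : Measure (Fin d → ℝ)) (⋃ j : Fin n, {w | j ≠ i ∧ w ⬝ᵥ y j = 0}) = 0 := by
    refine measure_iUnion_null fun j => ?_
    by_cases hj : j = i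
    · have : {w : Fin d → ℝ | j ≠ i ∧ w ⬝ᵥ y j = 0} = ∅ := by
        ext w; simp [hj]
      simp [this]
    · set f : (Fin d → ℝ) →ₗ[ℝ] ℝ :=
        { toFun := fun w => w ⬝ᵥ y j
          map_add' := fun a b => add_dotProduct a b (y j)
          map_smul' := fun c a => smul_dotProduct c a (y j) } with hf
      have hker : LinearMap.ker f ≠ ⊤ := by
        intro htop
        have : y j ⬝ᵥ y j = 0 := by
          have := LinearMap.ker_eq_top.mp htop
          have := congrFun (congrArg DFunLike.coe this) (y j)
          simpa [hf] using this
        exact hy j hj (dotProduct_self_eq_zero.mp this)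
      refine measure_mono_null (fun w hw => ?_) (Measure.addHaar_submodule volume _ hker)
      exact hw.2
  have := (isOpen_univ (X := Fin d → ℝ)).measure_ne_zero volume Set.univ_nonempty
  exact this (le_antisymm ((measure_mono hcover).trans hnull.le) (zero_le ..))

theorem ntk_gram_posdef
    (d n : ℕ) (hd : 0 < d) (hn : 0 < n)
    (x : Fin n → (Fin d → ℝ))
    (hunit : ∀ i, x i ⬝ᵥ x i = 1)
    (hnotpar : ∀ i j, i ≠ j → x i ≠ x j ∧ x i ≠ -x j) :
    Matrix.PosDef (Matrix.of fun i j : Fin n =>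
      (x i ⬝ᵥ x j) *
        ((Measure.pi fun _ : Fin d => ProbabilityTheory.gaussianReal 0 1)
          {w : Fin d → ℝ | 0 ≤ w ⬝ᵥ x i ∧ 0 ≤ w ⬝ᵥ x j}).toReal) := by
  set μP : Measure (Fin d → ℝ) :=
    Measure.pi fun _ : Fin d => ProbabilityTheory.gaussianReal 0 1 with hμP
  have hA : ∀ i : Fin n, MeasurableSet {w : Fin d → ℝ | 0 ≤ w ⬝ᵥ x i} := fun i =>
    measurableSet_le measurable_const (ntk_cont_dot (x i)).measurable
  have hAB : ∀ i j : Fin n,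
      MeasurableSet {w : Fin d → ℝ | 0 ≤ w ⬝ᵥ x i ∧ 0 ≤ w ⬝ᵥ x j} := by
    intro i j
    have : {w : Fin d → ℝ | 0 ≤ w ⬝ᵥ x i ∧ 0 ≤ w ⬝ᵥ x j} =
        {w | 0 ≤ w ⬝ᵥ x i} ∩ {w | 0 ≤ w ⬝ᵥ x j} := rfl
    rw [this]; exact (hA i).inter (hA j)
  -- the vector-valued feature maps
  set g : Fin n → (Fin d → ℝ) → (Fin d → ℝ) :=
    fun i w => if 0 ≤ w ⬝ᵥ x i then x i else 0 with hg
  rw [Matrix.posDef_iff_dotProduct_mulVec]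
  constructor
  · -- Hermitian
    ext i j
    show (x j ⬝ᵥ x i) * _ = (x i ⬝ᵥ x j) * _
    have hset : {w : Fin d → ℝ | 0 ≤ w ⬝ᵥ x j ∧ 0 ≤ w ⬝ᵥ x i}
        = {w : Fin d → ℝ | 0 ≤ w ⬝ᵥ x i ∧ 0 ≤ w ⬝ᵥ x j} := by
      ext w; exact and_comm
    rw [dotProduct_comm, hset]
  · intro v hv
    -- the aggregated feature map
    set S : (Fin d → ℝ) → (Fin d → ℝ) := fun w => ∑ j, v j • g j w with hS
    set F : Fin n → Fin n → (Fin d → ℝ) → ℝ := fun i j =>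
      Set.indicator {w : Fin d → ℝ | 0 ≤ w ⬝ᵥ x i ∧ 0 ≤ w ⬝ᵥ x j}
        (fun _ => x i ⬝ᵥ x j) with hF
    have hgF : ∀ i j w, g i w ⬝ᵥ g j w = F i j w := by
      intro i j w
      by_cases h1 : 0 ≤ w ⬝ᵥ x i <;> by_cases h2 : 0 ≤ w ⬝ᵥ x j <;>
        simp [hg, hF, Set.indicator_apply, h1, h2]
    have hFint : ∀ i j, Integrable (F i j) μP :=
      fun i j => (integrable_const (x i ⬝ᵥ x j)).indicator (hAB i j)
    have hexp : ∀ w, S w ⬝ᵥ S w = ∑ i, ∑ j, (v i * v j) * F i j w := by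
      intro w
      simp only [hS]
      rw [ntk_sum_dot]
      refine Finset.sum_congr rfl fun i _ => ?_
      rw [smul_dotProduct, ntk_dot_sum, smul_eq_mul, Finset.mul_sum]
      refine Finset.sum_congr rfl fun j _ => ?_
      rw [dotProduct_smul, hgF i j w, smul_eq_mul]
      ring
    have hquad : dotProduct (star v)
        ((Matrix.of fun i j : Fin n =>
          (x i ⬝ᵥ x j) * (μP {w : Fin d → ℝ | 0 ≤ w ⬝ᵥ x i ∧ 0 ≤ w ⬝ᵥ x j}).toReal) *ᵥ v)
        = ∫ w, S w ⬝ᵥ S w ∂μP := by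
      have hI : ∀ i j : Fin n, ∫ w, F i j w ∂μP =
          (x i ⬝ᵥ x j) * (μP {w : Fin d → ℝ | 0 ≤ w ⬝ᵥ x i ∧ 0 ≤ w ⬝ᵥ x j}).toReal := by
        intro i j
        rw [hF]
        rw [integral_indicator_const _ (hAB i j)]
        simp [mul_comm, measureReal_def]
      calc dotProduct (star v) _
          = ∑ i, ∑ j, (v i * v j) *
              ((x i ⬝ᵥ x j) * (μP {w : Fin d → ℝ | 0 ≤ w ⬝ᵥ x i ∧ 0 ≤ w ⬝ᵥ x j}).toReal) := by
            simp only [star_trivial, dotProduct, mulVec, Matrix.of_apply, Finset.mul_sum]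
            exact Finset.sum_congr rfl fun i _ => Finset.sum_congr rfl fun j _ => by ring
        _ = ∑ i, ∑ j, ∫ w, (v i * v j) * F i j w ∂μP := by
            refine Finset.sum_congr rfl fun i _ => Finset.sum_congr rfl fun j _ => ?_
            rw [integral_const_mul, hI]
        _ = ∫ w, ∑ i, ∑ j, (v i * v j) * F i j w ∂μP := by
            rw [integral_finset_sum _ fun i _ =>
              integrable_finset_sum _ fun j _ => (hFint i j).const_mul _]
            exact Finset.sum_congr rfl fun i _ =>
              (integral_finset_sum _ fun j _ => (hFint i j).const_mul _).symm
        _ = ∫ w, S w ⬝ᵥ S w ∂μP := by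
            refine integral_congr_ae (Filter.Eventually.of_forall fun w => ?_)
            exact (hexp w).symm
    rw [hquad]
    have hNnonneg : ∀ w, 0 ≤ S w ⬝ᵥ S w := by
      intro w
      exact Finset.sum_nonneg fun k _ => mul_self_nonneg _
    have hNint : Integrable (fun w => S w ⬝ᵥ S w) μP := by
      have : (fun w => S w ⬝ᵥ S w) = fun w => ∑ i, ∑ j, (v i * v j) * F i j w :=
        funext hexp
      rw [this]
      exact integrable_finset_sum _ fun i _ =>
        integrable_finset_sum _ fun j _ => (hFint i j).const_mul _
    rcases lt_or_eq_of_le (integral_nonneg (f := fun w => S w ⬝ᵥ S w) hNnonneg) with hpos | hzero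
    · exact hpos
    exfalso
    -- integral zero ⟹ S = 0 a.e.
    have hae : (fun w => S w ⬝ᵥ S w) =ᵐ[μP] 0 :=
      (integral_eq_zero_iff_of_nonneg hNnonneg hNint).mp hzero.symm
    have hZ : μP {w | S w ≠ 0} = 0 := by
      have h1 : μP {w | ¬ (S w ⬝ᵥ S w = (0 : (Fin d → ℝ) → ℝ) w)} = 0 := hae
      refine measure_mono_null (fun w hw => ?_) h1
      simp only [Set.mem_setOf_eq, Pi.zero_apply] at hw ⊢
      intro hc
      exact hw (funext fun k => by
        have := (Finset.sum_eq_zero_iff_of_nonneg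
          (fun k _ => mul_self_nonneg (S w k))).mp hc k (Finset.mem_univ k)
        exact mul_self_eq_zero.mp this)
    -- now show v = 0, contradiction
    apply hv
    funext i
    -- step 1: orthogonal components are nonzero
    set y : Fin n → (Fin d → ℝ) := fun j => x j - (x i ⬝ᵥ x j) • x i with hy
    have hynz : ∀ j, j ≠ i → y j ≠ 0 := by
      intro j hj h0
      have hxj : x j = (x i ⬝ᵥ x j) • x i := by
        have := sub_eq_zero.mp h0
        simpa using this
      have hc2 : (x i ⬝ᵥ x j) * (x i ⬝ᵥ x j) = 1 := by
        have h1 : x j ⬝ᵥ x j = 1 := hunit j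
        rw [hxj] at h1
        simpa [smul_dotProduct, dotProduct_smul, hunit i, smul_eq_mul] using h1
      have := mul_self_eq_one_iff.mp hc2
      rcases this with h | h
      · exact (hnotpar i j hj.symm).1 (by rw [hxj, h, one_smul])
      · refine (hnotpar i j hj.symm).2 ?_
        rw [hxj, h]
        simp
    obtain ⟨w₁, hw₁⟩ := ntk_avoid y i hynz
    set w₀ : Fin d → ℝ := w₁ - (w₁ ⬝ᵥ x i) • x i with hw₀
    have hw₀i : w₀ ⬝ᵥ x i = 0 := by
      simp [hw₀, sub_dotProduct, smul_dotProduct, hunit i, smul_eq_mul]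
    have hw₀j : ∀ j, j ≠ i → w₀ ⬝ᵥ x j ≠ 0 := by
      intro j hj
      have : w₀ ⬝ᵥ x j = w₁ ⬝ᵥ y j := by
        simp only [hw₀, hy, sub_dotProduct, dotProduct_sub, dotProduct_smul,
          smul_dotProduct, smul_eq_mul]
        rw [dotProduct_comm (x i) (x j)]
        ring
      rw [this]
      exact hw₁ j hj
    -- the open set where all other signs are fixed
    set V : Fin n → Set (Fin d → ℝ) := fun j =>
      if 0 < w₀ ⬝ᵥ x j then {w | 0 < w ⬝ᵥ x j} else {w | w ⬝ᵥ x j < 0} with hV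
    have hVpos : ∀ j, 0 < w₀ ⬝ᵥ x j → V j = {w | 0 < w ⬝ᵥ x j} := by
      intro j h; simp only [hV]; rw [if_pos h]
    have hVneg : ∀ j, ¬ 0 < w₀ ⬝ᵥ x j → V j = {w | w ⬝ᵥ x j < 0} := by
      intro j h; simp only [hV]; rw [if_neg h]
    have hVopen : ∀ j, IsOpen (V j) := by
      intro j
      by_cases h : 0 < w₀ ⬝ᵥ x j
      · rw [hVpos j h]; exact isOpen_lt continuous_const (ntk_cont_dot (x j))
      · rw [hVneg j h]; exact isOpen_lt (ntk_cont_dot (x j)) continuous_const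
    have hw₀V : ∀ j, j ≠ i → w₀ ∈ V j := by
      intro j hj
      by_cases h : 0 < w₀ ⬝ᵥ x j
      · rw [hVpos j h]; exact h
      · rw [hVneg j h]; exact lt_of_le_of_ne (not_lt.mp h) (hw₀j j hj)
    have hgV : ∀ j, j ≠ i → ∀ w ∈ V j, g j w = if 0 < w₀ ⬝ᵥ x j then x j else 0 := by
      intro j hj w hw
      by_cases h : 0 < w₀ ⬝ᵥ x j
      · rw [hVpos j h] at hw
        rw [if_pos h]
        simp only [hg]
        rw [if_pos (le_of_lt hw)]
      · rw [hVneg j h] at hw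
        rw [if_neg h]
        simp only [hg]
        rw [if_neg (not_le.mpr hw)]
    set U : Set (Fin d → ℝ) := ⋂ j ∈ Finset.univ.erase i, V j with hU
    have hUopen : IsOpen U := isOpen_biInter_finset fun j _ => hVopen j
    have hw₀U : w₀ ∈ U := Set.mem_iInter₂.2 fun j hj => hw₀V j (Finset.ne_of_mem_erase hj)
    -- value of S on U, split by sign of w ⬝ᵥ x i
    set C : Fin d → ℝ := ∑ j ∈ Finset.univ.erase i,
      v j • (if 0 < w₀ ⬝ᵥ x j then x j else 0) with hC
    have hSU : ∀ w ∈ U, S w = v i • g i w + C := by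
      intro w hw
      simp only [hS, hC]
      rw [← Finset.add_sum_erase _ _ (Finset.mem_univ i)]
      congr 1
      refine Finset.sum_congr rfl fun j hj => ?_
      rw [hgV j (Finset.ne_of_mem_erase hj) w (Set.mem_iInter₂.1 hw j hj)]
    -- nonempty open subsets on both sides of the hyperplane of x i
    have hline : ∀ t : ℝ, (w₀ + t • x i) ⬝ᵥ x i = t := by
      intro t
      simp [add_dotProduct, smul_dotProduct, hw₀i, hunit i, smul_eq_mul]
    have hmem : ∃ ε > (0:ℝ), ∀ t : ℝ, |t| < ε → w₀ + t • x i ∈ U := by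
      have hcont : Continuous fun t : ℝ => w₀ + t • x i :=
        continuous_const.add (continuous_id.smul continuous_const)
      have h0 : (fun t : ℝ => w₀ + t • x i) 0 = w₀ := by simp
      have hUnhds : U ∈ nhds w₀ := hUopen.mem_nhds hw₀U
      have hUnhds' : U ∈ nhds ((fun t : ℝ => w₀ + t • x i) 0) := by
        rw [h0]; exact hUnhds
      have hpre : (fun t : ℝ => w₀ + t • x i) ⁻¹' U ∈ nhds (0:ℝ) :=
        (hcont.continuousAt (x := (0:ℝ))).preimage_mem_nhds hUnhds'
      rcases Metric.mem_nhds_iff.mp hpre with ⟨ε, hε, hball⟩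
      exact ⟨ε, hε, fun t ht => hball (by simpa [Real.dist_eq] using ht)⟩
    obtain ⟨ε, hε, hball⟩ := hmem
    -- find points where S vanishes on both sides
    have hfind : ∀ (W : Set (Fin d → ℝ)), IsOpen W → W.Nonempty → ∃ w ∈ W, S w = 0 := by
      intro W hWopen hWne
      by_contra hcon
      push_neg at hcon
      have hsub : W ⊆ {w | S w ≠ 0} := fun w hw => hcon w hw
      exact hWopen.measure_ne_zero μP hWne (measure_mono_null hsub hZ)
    set wplus : Fin d → ℝ := w₀ + (ε/2) • x i with hwp
    set wminus : Fin d → ℝ := w₀ + (-(ε/2)) • x i with hwm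
    have hWp : ∃ w ∈ U ∩ {w | 0 < w ⬝ᵥ x i}, S w = 0 := by
      refine hfind _ (hUopen.inter (isOpen_lt continuous_const (ntk_cont_dot (x i)))) ⟨wplus, ?_, ?_⟩
      · exact hball _ (by rw [abs_of_pos (by linarith)]; linarith)
      · show 0 < wplus ⬝ᵥ x i
        rw [hwp, hline]; linarith
    have hWm : ∃ w ∈ U ∩ {w | w ⬝ᵥ x i < 0}, S w = 0 := by
      refine hfind _ (hUopen.inter (isOpen_lt (ntk_cont_dot (x i)) continuous_const)) ⟨wminus, ?_, ?_⟩
      · exact hball _ (by rw [abs_of_neg (by linarith)]; linarith)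
      · show wminus ⬝ᵥ x i < 0
        rw [hwm, hline]; linarith
    obtain ⟨wp, ⟨hwpU, hwpi⟩, hSp⟩ := hWp
    obtain ⟨wm, ⟨hwmU, hwmi⟩, hSm⟩ := hWm
    have hgp : g i wp = x i := by
      simp only [hg]; rw [if_pos (le_of_lt hwpi)]
    have hgm : g i wm = 0 := by
      simp only [hg]; rw [if_neg (not_le.mpr hwmi)]
    have h1 : v i • x i + C = 0 := by rw [← hgp, ← hSU wp hwpU]; exact hSp
    have h2 : C = 0 := by
      have := hSU wm hwmU
      rw [hgm, smul_zero, zero_add] at this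
      rw [← this]; exact hSm
    have h3 : v i • x i = 0 := by rw [h2, add_zero] at h1; exact h1
    have h4 : v i * (x i ⬝ᵥ x i) = 0 := by
      have h5 : (v i • x i) ⬝ᵥ x i = 0 := by rw [h3, zero_dotProduct]
      rwa [smul_dotProduct, smul_eq_mul] at h5
    rw [hunit i, mul_one] at h4
    exact h4
end
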